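/- arXiv:2410.23869 — 9 statements merged into one kernel-verified Lean document; each statement's English description precedes it below -/
import Mathlib

section
/- Let (p,H) be an apportionment instance, let δ₁, δ₂ ∈ [0,1] with δ₁ < δ₂, and let x ∈ f(p,H;δ₁) ∩ f(p,H;δ₂). Then for every δ ∈ [δ₁, δ₂] one has x ∈ f(p,H;δ). -/
open scoped Classical
open Set

noncomputable section

/-- The stationary rounding rule `⟦r⟧_δ ⊆ ℕ`. -/
def roundSet (δ r : ℝ) : Set ℕ :=
  {x | (r < δ ∧ x = 0) ∨
       (∃ t : ℕ, x = t ∧ (t : ℝ) - 1 + δ < r ∧ r < (t : ℝ) + δ) ∨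
       (∃ t : ℕ, (x = t ∨ x = t + 1) ∧ r = (t : ℝ) + δ)}

/-- The output set `f(p,H;δ)` of the stationary `δ`-divisor method. -/
def divisorOutput {n : ℕ} (p : Fin n → ℕ) (H : ℕ) (δ : ℝ) : Set (Fin n → ℕ) :=
  {x | (∑ i, x i) = H ∧ ∃ lam : ℝ, 0 < lam ∧ ∀ i, x i ∈ roundSet δ (lam * (p i : ℝ))}

/-- The quota `q_i = p_i · H / P` of state `i`. -/
def quota {n : ℕ} (p : Fin n → ℕ) (H : ℕ) (i : Fin n) : ℝ :=
  (p i : ℝ) * (H : ℝ) / (∑ j, (p j : ℝ))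

lemma mem_roundSet_iff {δ r : ℝ} (hδ1 : δ ≤ 1) (hr : 0 < r) (x : ℕ) :
    x ∈ roundSet δ r ↔ (x : ℝ) - 1 + δ ≤ r ∧ r ≤ (x : ℝ) + δ := by
  constructor
  · rintro (⟨h, rfl⟩ | ⟨t, rfl, h1, h2⟩ | ⟨t, (rfl | rfl), h⟩)
    · constructor <;> simp <;> linarith
    · exact ⟨h1.le, h2.le⟩
    · constructor <;> linarith
    · push_cast; constructor <;> linarith
  · rintro ⟨h1, h2⟩
    rcases eq_or_lt_of_le h2 with h2' | h2'
    · exact Or.inr (Or.inr ⟨x, Or.inl rfl, h2'⟩)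
    rcases eq_or_lt_of_le h1 with h1' | h1'
    · have hx0 : x ≠ 0 := by
        rintro rfl
        simp at h1'
        linarith
      refine Or.inr (Or.inr ⟨x - 1, Or.inr (by omega), ?_⟩)
      have : ((x - 1 : ℕ) : ℝ) = (x : ℝ) - 1 := by
        have : 1 ≤ x := Nat.one_le_iff_ne_zero.mpr hx0
        push_cast [this]; ring
      rw [this]; linarith
    · exact Or.inr (Or.inl ⟨x, rfl, h1', h2'⟩)

/-- if `x` is output by both the `δ₁`- and the `δ₂`-divisor method, then it is
output by the `δ`-divisor method for every `δ ∈ [δ₁, δ₂]`. -/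
theorem stmt_0 {n : ℕ} (hn : 1 ≤ n) (p : Fin n → ℕ) (hp : ∀ i, 0 < p i)
    (H : ℕ) (hH : 1 ≤ H) (δ₁ δ₂ : ℝ) (hδ₁ : δ₁ ∈ Set.Icc (0 : ℝ) 1)
    (hδ₂ : δ₂ ∈ Set.Icc (0 : ℝ) 1) (hlt : δ₁ < δ₂) (x : Fin n → ℕ)
    (hx : x ∈ divisorOutput p H δ₁ ∩ divisorOutput p H δ₂)
    (δ : ℝ) (hδ : δ ∈ Set.Icc δ₁ δ₂) :
    x ∈ divisorOutput p H δ := by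
  obtain ⟨⟨hsum1, lam₁, hlam₁, h1⟩, ⟨hsum2, lam₂, hlam₂, h2⟩⟩ := hx
  obtain ⟨hd1, hd2⟩ := hδ
  set s : ℝ := (δ - δ₁) / (δ₂ - δ₁) with hs
  have hden : (0 : ℝ) < δ₂ - δ₁ := by linarith
  have hs0 : 0 ≤ s := div_nonneg (by linarith) hden.le
  have hs1 : s ≤ 1 := by
    rw [div_le_one hden]; linarith
  have hδeq : δ = (1 - s) * δ₁ + s * δ₂ := by
    field_simp [hs]
    have hsd : s * (δ₂ - δ₁) = δ - δ₁ := by rw [hs]; exact div_mul_cancel₀ _ hden.ne'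
    linear_combination -hsd
  set lam : ℝ := (1 - s) * lam₁ + s * lam₂ with hlamdef
  have hlam : 0 < lam := by
    rcases lt_or_ge s 1 with h | h
    · have := mul_pos (by linarith : (0:ℝ) < 1 - s) hlam₁
      nlinarith [mul_nonneg hs0 hlam₂.le]
    · have hs1' : s = 1 := le_antisymm hs1 h
      simp [hlamdef, hs1']; linarith
  refine ⟨hsum1, lam, hlam, fun i => ?_⟩
  have hpi : (0 : ℝ) < (p i : ℝ) := by exact_mod_cast hp i
  have hδle1 : δ ≤ 1 := le_trans hd2 hδ₂.2
  rw [mem_roundSet_iff hδle1 (mul_pos hlam hpi)]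
  have ha := (mem_roundSet_iff hδ₁.2 (mul_pos hlam₁ hpi) (x i)).mp (h1 i)
  have hb := (mem_roundSet_iff hδ₂.2 (mul_pos hlam₂ hpi) (x i)).mp (h2 i)
  have e1 := mul_le_mul_of_nonneg_left ha.1 (by linarith : (0:ℝ) ≤ 1 - s)
  have e2 := mul_le_mul_of_nonneg_left ha.2 (by linarith : (0:ℝ) ≤ 1 - s)
  have e3 := mul_le_mul_of_nonneg_left hb.1 hs0
  have e4 := mul_le_mul_of_nonneg_left hb.2 hs0
  constructor <;> nlinarith [e1, e2, e3, e4]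
end
end

section
/- For every apportionment instance (p,H) there exist τ, τ̄ ∈ [0,1] with τ ≤ τ̄ such that: (i) for every δ ∈ [0, τ̄], every x ∈ f(p,H;δ), and every i ∈ [n], x_i ≤ ⌈q_i⌉; and (ii) for every δ ∈ [τ, 1], every x ∈ f(p,H;δ), and every i ∈ [n], x_i ≥ ⌊q_i⌋. -/
open scoped Classical
open Set

noncomputable section

-- auxiliary
def Ptot {n : ℕ} (p : Fin n → ℕ) : ℝ := ∑ j, (p j : ℝ)

lemma roundSet_bounds {δ r : ℝ} {x : ℕ} (hδ0 : 0 ≤ δ) (hδ1 : δ ≤ 1) (hr : 0 ≤ r)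
    (hx : x ∈ roundSet δ r) : r - δ ≤ (x : ℝ) ∧ (x : ℝ) ≤ r + 1 - δ := by
  rcases hx with ⟨h1, h2⟩ | ⟨t, rfl, h1, h2⟩ | ⟨t, (rfl | rfl), heq⟩
  · subst h2; constructor <;> simp <;> linarith
  · constructor <;> [linarith; linarith]
  · constructor <;> [linarith; linarith]
  · push_cast; constructor <;> [linarith; linarith]

section main
variable {n : ℕ} (p : Fin n → ℕ) (H : ℕ)

lemma Ptot_pos (hn : 1 ≤ n) (hp : ∀ i, 0 < p i) : 1 ≤ Ptot p := by
  have : (1:ℝ) ≤ (p ⟨0, by omega⟩ : ℝ) := by exact_mod_cast hp _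
  calc (1:ℝ) ≤ (p ⟨0, by omega⟩ : ℝ) := this
    _ ≤ Ptot p := Finset.single_le_sum (f := fun j => ((p j : ℝ)))
        (fun i _ => by positivity) (Finset.mem_univ _)

lemma p_le_Ptot (i : Fin n) : (p i : ℝ) ≤ Ptot p :=
  Finset.single_le_sum (f := fun j => ((p j : ℝ))) (fun i _ => by positivity)
    (Finset.mem_univ i)

lemma sum_quota (hn : 1 ≤ n) (hp : ∀ i, 0 < p i) : (∑ i, quota p H i) = H := by
  have hP : (0:ℝ) < Ptot p := lt_of_lt_of_le one_pos (Ptot_pos p hn hp)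
  unfold quota
  rw [← Finset.sum_div, ← Finset.sum_mul]
  rw [show (∑ j, ((p j : ℝ))) = Ptot p from rfl]
  field_simp

lemma quota_eq (i : Fin n) : quota p H i = (p i : ℝ) * (H:ℝ) / Ptot p := rfl

end main

section main2
variable {n : ℕ} {p : Fin n → ℕ} {H : ℕ}

/-- integrality: a natural strictly below the quota is at least 1/P below. -/
lemma below_quota {x : ℕ} {j : Fin n} (hn : 1 ≤ n) (hp : ∀ i, 0 < p i)
    (h : (x:ℝ) < quota p H j) : (x:ℝ) ≤ quota p H j - 1 / Ptot p := by
  have hP : (0:ℝ) < Ptot p := lt_of_lt_of_le one_pos (Ptot_pos p hn hp)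
  set N : ℤ := (p j : ℤ) * H - x * (∑ i, (p i : ℕ)) with hN
  have hcast : (N : ℝ) = (quota p H j - x) * Ptot p := by
    have hne : (∑ j, ((p j):ℝ)) ≠ 0 := ne_of_gt hP
    unfold quota Ptot
    push_cast [hN]
    field_simp [hne]
    try ring
  have hNpos : (0:ℝ) < (N:ℝ) := by
    rw [hcast]; exact mul_pos (by linarith) hP
  have hN1 : (1:ℤ) ≤ N := by exact_mod_cast hNpos
  have hN1' : (1:ℝ) ≤ (N:ℝ) := by exact_mod_cast hN1
  rw [hcast] at hN1'
  have : 1 / Ptot p ≤ quota p H j - x := by rw [div_le_iff₀ hP]; linarith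
  linarith

lemma above_quota {x : ℕ} {j : Fin n} (hn : 1 ≤ n) (hp : ∀ i, 0 < p i)
    (h : quota p H j < (x:ℝ)) : quota p H j + 1 / Ptot p ≤ (x:ℝ) := by
  have hP : (0:ℝ) < Ptot p := lt_of_lt_of_le one_pos (Ptot_pos p hn hp)
  set N : ℤ := x * (∑ i, (p i : ℕ)) - (p j : ℤ) * H with hN
  have hcast : (N : ℝ) = ((x:ℝ) - quota p H j) * Ptot p := by
    have hne : (∑ j, ((p j):ℝ)) ≠ 0 := ne_of_gt hP
    unfold quota Ptot
    push_cast [hN]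
    field_simp [hne]
    try ring
  have hNpos : (0:ℝ) < (N:ℝ) := by
    rw [hcast]; exact mul_pos (by linarith) hP
  have hN1 : (1:ℤ) ≤ N := by exact_mod_cast hNpos
  have hN1' : (1:ℝ) ≤ (N:ℝ) := by exact_mod_cast hN1
  rw [hcast] at hN1'
  have : 1 / Ptot p ≤ (x:ℝ) - quota p H j := by rw [div_le_iff₀ hP]; linarith
  linarith

end main2

section main3
variable {n : ℕ} {p : Fin n → ℕ} {H : ℕ}

lemma sum_x_real {x : Fin n → ℕ} (hs : (∑ i, x i) = H) : (∑ i, ((x i):ℝ)) = H := by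
  exact_mod_cast congrArg (Nat.cast : ℕ → ℝ) hs

/-- Key facts extracted from an upper-quota violation. -/
lemma keyU (hn : 1 ≤ n) (hp : ∀ i, 0 < p i) {δ : ℝ} (hδ : δ ∈ Set.Icc (0:ℝ) 1)
    {x : Fin n → ℕ} (hx : x ∈ divisorOutput p H δ) {k : Fin n}
    (hk : ⌈quota p H k⌉ < (x k : ℤ)) :
    ∃ lam : ℝ, (∀ i, lam * (p i : ℝ) - δ ≤ (x i : ℝ) ∧ (x i : ℝ) ≤ lam * (p i : ℝ) + 1 - δ) ∧
      (H:ℝ)/Ptot p + δ/Ptot p ≤ lam ∧ 1/Ptot p ≤ δ := by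
  have hP : (1:ℝ) ≤ Ptot p := Ptot_pos p hn hp
  have hP0 : (0:ℝ) < Ptot p := by linarith
  obtain ⟨hsum, lam, hlam, hmem⟩ := hx
  have hb : ∀ i, lam * (p i : ℝ) - δ ≤ (x i : ℝ) ∧ (x i : ℝ) ≤ lam * (p i : ℝ) + 1 - δ := by
    intro i
    exact roundSet_bounds hδ.1 hδ.2 (by positivity) (hmem i)
  have hpk : (0:ℝ) < (p k : ℝ) := by exact_mod_cast hp k
  have hpkP : (p k : ℝ) ≤ Ptot p := p_le_Ptot p k
  have hxk : quota p H k + 1 ≤ (x k : ℝ) := by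
    have h1 : (⌈quota p H k⌉ : ℝ) + 1 ≤ ((x k : ℤ) : ℝ) := by exact_mod_cast hk
    have h2 := Int.le_ceil (quota p H k)
    push_cast at h1 ⊢
    linarith
  have hlow : (H:ℝ)/Ptot p + δ/Ptot p ≤ lam := by
    have h3 := (hb k).2
    have h4 : quota p H k + δ ≤ lam * (p k : ℝ) := by linarith
    rw [quota_eq] at h4
    rw [← add_div, div_le_iff₀ hP0]
    have h5 : ((H:ℝ) + δ) * (p k : ℝ) ≤ lam * (p k:ℝ) * Ptot p := by
      have := mul_le_mul_of_nonneg_right h4 (le_of_lt hP0)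
      calc ((H:ℝ) + δ) * (p k : ℝ) = (p k : ℝ) * (H:ℝ) + δ * (p k:ℝ) := by ring
        _ ≤ (p k : ℝ) * (H:ℝ) + δ * Ptot p := by nlinarith [hδ.1]
        _ = ((p k : ℝ) * (H:ℝ) / Ptot p + δ) * Ptot p := by field_simp
        _ ≤ lam * (p k:ℝ) * Ptot p := this
    nlinarith
  refine ⟨lam, hb, hlow, ?_⟩
  have hsq : (∑ i, quota p H i) = H := sum_quota p H hn hp
  have hsx : (∑ i, ((x i):ℝ)) = H := sum_x_real hsum
  have hex : ∃ j, (x j : ℝ) < quota p H j := by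
    by_contra hcon
    push_neg at hcon
    have : (∑ i, quota p H i) < ∑ i, ((x i):ℝ) :=
      Finset.sum_lt_sum (fun i _ => hcon i) ⟨k, Finset.mem_univ k, by linarith⟩
    rw [hsq, hsx] at this
    exact lt_irrefl _ this
  obtain ⟨j, hj⟩ := hex
  have hj2 : (x j : ℝ) ≤ quota p H j - 1 / Ptot p := below_quota hn hp hj
  have hpj : (0:ℝ) < (p j : ℝ) := by exact_mod_cast hp j
  have h6 := (hb j).1
  have h7 : lam * (p j : ℝ) ≤ quota p H j - 1/Ptot p + δ := by linarith
  have h8 : ((H:ℝ)/Ptot p + δ/Ptot p) * (p j : ℝ) ≤ lam * (p j:ℝ) :=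
    mul_le_mul_of_nonneg_right hlow (le_of_lt hpj)
  rw [quota_eq] at h7
  have hpj1 : (1:ℝ) ≤ (p j : ℝ) := by exact_mod_cast hp j
  have key : δ/Ptot p * (p j:ℝ) + 1/Ptot p ≤ δ := by
    have e1 : (H:ℝ)/Ptot p * (p j : ℝ) = (p j:ℝ) * (H:ℝ) / Ptot p := by ring
    nlinarith
  have h9 : 0 ≤ δ/Ptot p * (p j:ℝ) := mul_nonneg (div_nonneg hδ.1 hP0.le) hpj.le
  linarith

/-- Key facts extracted from a lower-quota violation. -/
lemma keyL (hn : 1 ≤ n) (hp : ∀ i, 0 < p i) {δ : ℝ} (hδ : δ ∈ Set.Icc (0:ℝ) 1)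
    {x : Fin n → ℕ} (hx : x ∈ divisorOutput p H δ) {m : Fin n}
    (hm : (x m : ℤ) < ⌊quota p H m⌋) :
    ∃ lam : ℝ, (∀ i, lam * (p i : ℝ) - δ ≤ (x i : ℝ) ∧ (x i : ℝ) ≤ lam * (p i : ℝ) + 1 - δ) ∧
      lam ≤ (H:ℝ)/Ptot p - (1-δ)/Ptot p ∧ 1/Ptot p ≤ 1 - δ := by
  have hP : (1:ℝ) ≤ Ptot p := Ptot_pos p hn hp
  have hP0 : (0:ℝ) < Ptot p := by linarith
  obtain ⟨hsum, lam, hlam, hmem⟩ := hx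
  have hb : ∀ i, lam * (p i : ℝ) - δ ≤ (x i : ℝ) ∧ (x i : ℝ) ≤ lam * (p i : ℝ) + 1 - δ := by
    intro i
    exact roundSet_bounds hδ.1 hδ.2 (by positivity) (hmem i)
  have hpm : (0:ℝ) < (p m : ℝ) := by exact_mod_cast hp m
  have hpmP : (p m : ℝ) ≤ Ptot p := p_le_Ptot p m
  have hxm : (x m : ℝ) ≤ quota p H m - 1 := by
    have h1 : ((x m : ℤ) : ℝ) + 1 ≤ (⌊quota p H m⌋ : ℝ) := by exact_mod_cast hm
    have h2 := Int.floor_le (quota p H m)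
    push_cast at h1 ⊢
    linarith
  have hhigh : lam ≤ (H:ℝ)/Ptot p - (1-δ)/Ptot p := by
    have h3 := (hb m).1
    have h4 : lam * (p m : ℝ) ≤ quota p H m - (1 - δ) := by linarith
    rw [quota_eq] at h4
    rw [div_sub_div_same, le_div_iff₀ hP0]
    have := mul_le_mul_of_nonneg_right h4 (le_of_lt hP0)
    have e2 : ((p m : ℝ) * (H:ℝ) / Ptot p - (1-δ)) * Ptot p
        = (p m : ℝ) * (H:ℝ) - (1-δ) * Ptot p := by field_simp
    have h5 : lam * (p m:ℝ) * Ptot p ≤ (p m : ℝ) * (H:ℝ) - (1-δ) * Ptot p := by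
      rw [← e2]; exact this
    have h6 : (1-δ) * (p m : ℝ) ≤ (1-δ) * Ptot p := by nlinarith [hδ.2]
    nlinarith
  refine ⟨lam, hb, hhigh, ?_⟩
  have hsq : (∑ i, quota p H i) = H := sum_quota p H hn hp
  have hsx : (∑ i, ((x i):ℝ)) = H := sum_x_real hsum
  have hex : ∃ j, quota p H j < (x j : ℝ) := by
    by_contra hcon
    push_neg at hcon
    have : (∑ i, ((x i):ℝ)) < ∑ i, quota p H i :=
      Finset.sum_lt_sum (fun i _ => hcon i) ⟨m, Finset.mem_univ m, by linarith⟩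
    rw [hsq, hsx] at this
    exact lt_irrefl _ this
  obtain ⟨j, hj⟩ := hex
  have hj2 : quota p H j + 1 / Ptot p ≤ (x j : ℝ) := above_quota hn hp hj
  have hpj : (0:ℝ) < (p j : ℝ) := by exact_mod_cast hp j
  have h6 := (hb j).2
  have h7 : quota p H j + 1/Ptot p - 1 + δ ≤ lam * (p j : ℝ) := by linarith
  have h8 : lam * (p j:ℝ) ≤ ((H:ℝ)/Ptot p - (1-δ)/Ptot p) * (p j : ℝ) :=
    mul_le_mul_of_nonneg_right hhigh (le_of_lt hpj)
  rw [quota_eq] at h7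
  have hpj1 : (1:ℝ) ≤ (p j : ℝ) := by exact_mod_cast hp j
  have key : 1/Ptot p - (1-δ) ≤ -((1-δ)/Ptot p * (p j:ℝ)) := by
    have e1 : (H:ℝ)/Ptot p * (p j : ℝ) = (p j:ℝ) * (H:ℝ) / Ptot p := by ring
    nlinarith
  have h9 : 0 ≤ (1-δ)/Ptot p * (p j:ℝ) :=
    mul_nonneg (div_nonneg (by linarith [hδ.2]) hP0.le) hpj.le
  linarith

/-- Separation with a gap: an upper-quota violation at `δ` and a lower-quota violation
at `δ'` force `δ > δ' + 1/(2P)`. -/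
lemma gapLem (hn : 1 ≤ n) (hp : ∀ i, 0 < p i) {δ δ' : ℝ}
    (hδ : δ ∈ Set.Icc (0:ℝ) 1) (hδ' : δ' ∈ Set.Icc (0:ℝ) 1)
    {x y : Fin n → ℕ} (hx : x ∈ divisorOutput p H δ) (hy : y ∈ divisorOutput p H δ')
    {k m : Fin n} (hk : ⌈quota p H k⌉ < (x k : ℤ)) (hm : (y m : ℤ) < ⌊quota p H m⌋) :
    δ' + 1/(2 * Ptot p) < δ := by
  by_contra hcon
  push_neg at hcon
  have hP : (1:ℝ) ≤ Ptot p := Ptot_pos p hn hp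
  have hP0 : (0:ℝ) < Ptot p := by linarith
  have hsx := hx.1
  have hsy := hy.1
  obtain ⟨lam, hlb, hlamlow, hδlow⟩ := keyU hn hp hδ hx hk
  obtain ⟨mu, hmb, hmuhigh, hδ'high⟩ := keyL hn hp hδ' hy hm
  -- s := δ - δ' satisfies s ≤ 1/(2P)
  have hs : δ - δ' ≤ 1/(2 * Ptot p) := by linarith
  -- key strict inequality : (δ - δ') < (1 + δ - δ')/P
  have hkey : δ - δ' < (1 + δ - δ')/Ptot p := by
    rw [lt_div_iff₀ hP0]
    rcases le_or_gt (δ - δ') 0 with hs0 | hs0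
    · nlinarith [mul_nonneg (neg_nonneg.2 hs0) (sub_nonneg.2 hP)]
    · have h1 : (δ - δ') * Ptot p ≤ 1/(2 * Ptot p) * Ptot p :=
        mul_le_mul_of_nonneg_right hs hP0.le
      have h2 : 1/(2 * Ptot p) * Ptot p = 1/2 := by field_simp
      linarith
  -- lam - mu lower bound
  have hlm : (1 + δ - δ')/Ptot p ≤ lam - mu := by
    have e : (1 + δ - δ')/Ptot p = δ/Ptot p + (1-δ')/Ptot p := by ring
    rw [e]; linarith
  have hlm0 : 0 ≤ lam - mu := by
    have : 0 ≤ (1 + δ - δ')/Ptot p := div_nonneg (by linarith [hδ.1, hδ'.2]) hP0.le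
    linarith
  -- pointwise: y i ≤ x i
  have hyx : ∀ i ∈ Finset.univ, y i ≤ x i := by
    intro i _
    have b1 := (hlb i).1
    have b2 := (hmb i).2
    have hpi1 : (1:ℝ) ≤ (p i : ℝ) := by exact_mod_cast hp i
    have hprod : 0 ≤ (lam - mu) * ((p i : ℝ) - 1) := mul_nonneg hlm0 (by linarith)
    have hcast : (y i : ℝ) < (x i : ℝ) + 1 := by nlinarith
    have : y i < x i + 1 := by exact_mod_cast hcast
    omega
  -- sums are equal, hence x = y
  have hsums : (∑ i, y i) = ∑ i, x i := by rw [hsx, hsy]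
  have heq : ∀ i ∈ Finset.univ, y i = x i :=
    (Finset.sum_eq_sum_iff_of_le hyx).1 hsums
  -- now x violates lower quota at m as well
  have hxm : (x m : ℝ) ≤ quota p H m - 1 := by
    have hym : (y m : ℤ) < ⌊quota p H m⌋ := hm
    rw [heq m (Finset.mem_univ m)] at hym
    have h1 : ((x m : ℤ) : ℝ) + 1 ≤ (⌊quota p H m⌋ : ℝ) := by exact_mod_cast hym
    have h2 := Int.floor_le (quota p H m)
    push_cast at h1 ⊢
    linarith
  have hpm : (0:ℝ) < (p m : ℝ) := by exact_mod_cast hp m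
  have hpm1 : (1:ℝ) ≤ (p m : ℝ) := by exact_mod_cast hp m
  have h4 : lam * (p m:ℝ) ≤ quota p H m - 1 + δ := by
    have := (hlb m).1; linarith
  rw [quota_eq] at h4
  -- multiply lam lower bound by p m * P
  have h5 : ((H:ℝ)/Ptot p + δ/Ptot p) * ((p m:ℝ) * Ptot p) ≤ lam * ((p m:ℝ) * Ptot p) :=
    mul_le_mul_of_nonneg_right hlamlow (by positivity)
  have e1 : ((H:ℝ)/Ptot p + δ/Ptot p) * ((p m:ℝ) * Ptot p) = ((H:ℝ) + δ) * (p m:ℝ) := by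
    field_simp
  have h6 : lam * ((p m:ℝ) * Ptot p) ≤ ((p m:ℝ) * (H:ℝ)/Ptot p - 1 + δ) * Ptot p := by
    have := mul_le_mul_of_nonneg_right h4 hP0.le
    calc lam * ((p m:ℝ) * Ptot p) = lam * (p m:ℝ) * Ptot p := by ring
      _ ≤ ((p m:ℝ) * (H:ℝ)/Ptot p - 1 + δ) * Ptot p := this
  have e2 : ((p m:ℝ) * (H:ℝ)/Ptot p - 1 + δ) * Ptot p
      = (p m:ℝ) * (H:ℝ) + (δ - 1) * Ptot p := by field_simp; ring
  have hfin : δ * (p m:ℝ) ≤ (δ - 1) * Ptot p := by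
    rw [e1] at h5; rw [e2] at h6; nlinarith
  nlinarith [mul_nonneg hδ.1 (sub_nonneg.2 hpm1),
    mul_nonneg (sub_nonneg.2 hδ.2) (sub_nonneg.2 hP)]

end main3

/-- for every instance there are `τ ≤ τ̄` in `[0,1]` such that upper quota holds
for `δ ∈ [0, τ̄]` and lower quota holds for `δ ∈ [τ, 1]`. -/
theorem stmt_2 {n : ℕ} (hn : 1 ≤ n) (p : Fin n → ℕ) (hp : ∀ i, 0 < p i)
    (H : ℕ) (hH : 1 ≤ H) :
    ∃ τ τbar : ℝ, τ ∈ Set.Icc (0 : ℝ) 1 ∧ τbar ∈ Set.Icc (0 : ℝ) 1 ∧ τ ≤ τbar ∧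
      (∀ δ ∈ Set.Icc (0 : ℝ) τbar, ∀ x ∈ divisorOutput p H δ, ∀ i,
        (x i : ℤ) ≤ ⌈quota p H i⌉) ∧
      (∀ δ ∈ Set.Icc τ (1 : ℝ), ∀ x ∈ divisorOutput p H δ, ∀ i,
        ⌊quota p H i⌋ ≤ (x i : ℤ)) := by
  have hP : (1:ℝ) ≤ Ptot p := Ptot_pos p hn hp
  have hP0 : (0:ℝ) < Ptot p := by linarith
  set L : Set ℝ := {δ' | δ' ∈ Set.Icc (0:ℝ) 1 ∧
      ∃ y ∈ divisorOutput p H δ', ∃ m, (y m : ℤ) < ⌊quota p H m⌋} with hL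
  have hbdd : BddAbove (insert (0:ℝ) L) := by
    refine ⟨1, ?_⟩
    rintro b (rfl | hb)
    · norm_num
    · exact hb.1.2
  set a : ℝ := sSup (insert (0:ℝ) L) with ha
  have ha0 : 0 ≤ a := le_csSup hbdd (Set.mem_insert _ _)
  have haub : a ≤ 1 - 1/Ptot p := by
    refine csSup_le ⟨0, Set.mem_insert _ _⟩ ?_
    rintro b (rfl | hb)
    · have : 1/Ptot p ≤ 1 := by
        rw [div_le_one hP0]; linarith
      linarith
    · obtain ⟨hbI, y, hy, m, hm⟩ := hb
      obtain ⟨mu, _, _, h⟩ := keyL hn hp hbI hy hm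
      linarith
  have h4P : (0:ℝ) < 1/(4 * Ptot p) := by positivity
  have hgap2 : 1/(4 * Ptot p) ≤ 1/Ptot p := by
    rw [div_le_div_iff₀ (by positivity) hP0]; linarith
  refine ⟨a + 1/(4 * Ptot p), a + 1/(4 * Ptot p), ⟨by linarith, by linarith⟩,
    ⟨by linarith, by linarith⟩, le_refl _, ?_, ?_⟩
  · -- upper quota on [0, τ]
    intro δ hδI x hx i
    by_contra hcon
    push_neg at hcon
    have hδ1 : δ ∈ Set.Icc (0:ℝ) 1 := ⟨hδI.1, by
      have := hδI.2; linarith⟩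
    obtain ⟨lam, _, _, hδlow⟩ := keyU hn hp hδ1 hx hcon
    -- every element of insert 0 L is ≤ δ - 1/(2P)
    have hub : a ≤ δ - 1/(2 * Ptot p) := by
      refine csSup_le ⟨0, Set.mem_insert _ _⟩ ?_
      rintro b (rfl | hb)
      · have : 1/(2 * Ptot p) ≤ 1/Ptot p := by
          rw [div_le_div_iff₀ (by positivity) hP0]; linarith
        linarith
      · obtain ⟨hbI, y, hy, m, hm⟩ := hb
        have := gapLem hn hp hδ1 hbI hx hy hcon hm
        linarith
    have hhalf : 1/(4 * Ptot p) < 1/(2 * Ptot p) := by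
      rw [div_lt_div_iff₀ (by positivity) (by positivity)]; linarith
    have := hδI.2
    linarith
  · -- lower quota on [τ, 1]
    intro δ hδI x hx i
    by_contra hcon
    push_neg at hcon
    have hδ1 : δ ∈ Set.Icc (0:ℝ) 1 := ⟨by linarith [hδI.1], hδI.2⟩
    have hδL : δ ∈ L := ⟨hδ1, x, hx, i, hcon⟩
    have : δ ≤ a := le_csSup hbdd (Set.mem_insert_of_mem _ hδL)
    have := hδI.1
    linarith
end
end

section
/- For every apportionment instance (p,H) with n states, the number of pairs (i,t) with i ∈ [n] and t ∈ {0,…,H−1} for which there exists δ ∈ [0,1] with (t+δ)/p_i = λ_H(δ) is at most 2n−1. -/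
open scoped Classical
open Set

noncomputable section

/-- `λ_H(δ)`: the minimum `λ` such that at least `H` of the values `(t+δ)/p_i`
(`i ∈ [n]`, `t ∈ {0,…,H−1}`) are at most `λ`. -/
def lambdaH {n : ℕ} (p : Fin n → ℕ) (H : ℕ) (δ : ℝ) : ℝ :=
  sInf {lam : ℝ |
    H ≤ ((Finset.univ ×ˢ Finset.range H).filter
      (fun it : Fin n × ℕ => ((it.2 : ℝ) + δ) / (p it.1 : ℝ) ≤ lam)).card}

namespace Stmt5Aux

open Finset

variable {n : ℕ}

/-- The underlying index finset. -/
def D (n H : ℕ) : Finset (Fin n × ℕ) := Finset.univ ×ˢ Finset.range H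

/-- The set whose infimum is `lambdaH`. -/
def T (p : Fin n → ℕ) (H : ℕ) (δ : ℝ) : Set ℝ :=
  {lam : ℝ |
    H ≤ ((Finset.univ ×ˢ Finset.range H).filter
      (fun it : Fin n × ℕ => ((it.2 : ℝ) + δ) / (p it.1 : ℝ) ≤ lam)).card}

lemma lambdaH_eq (p : Fin n → ℕ) (H : ℕ) (δ : ℝ) : lambdaH p H δ = sInf (T p H δ) := rfl

lemma val_nonneg (p : Fin n → ℕ) {δ : ℝ} (hδ : 0 ≤ δ) (it : Fin n × ℕ) :
    0 ≤ ((it.2 : ℝ) + δ) / (p it.1 : ℝ) := by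
  apply div_nonneg
  · have : (0:ℝ) ≤ (it.2 : ℝ) := Nat.cast_nonneg _
    linarith
  · exact Nat.cast_nonneg _

lemma T_lowerBound (p : Fin n → ℕ) {H : ℕ} (hH : 1 ≤ H) {δ : ℝ} (hδ : 0 ≤ δ) :
    ∀ lam ∈ T p H δ, (0:ℝ) ≤ lam := by
  intro lam hlam
  have hcard : 1 ≤ ((Finset.univ ×ˢ Finset.range H).filter
      (fun it : Fin n × ℕ => ((it.2 : ℝ) + δ) / (p it.1 : ℝ) ≤ lam)).card :=
    le_trans hH hlam
  obtain ⟨it, hit⟩ := Finset.card_pos.mp hcard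
  have h2 := (Finset.mem_filter.mp hit).2
  exact le_trans (val_nonneg p hδ it) h2

lemma T_bddBelow (p : Fin n → ℕ) {H : ℕ} (hH : 1 ≤ H) {δ : ℝ} (hδ : 0 ≤ δ) :
    BddBelow (T p H δ) := ⟨0, T_lowerBound p hH hδ⟩

lemma T_nonempty (hn : 1 ≤ n) (p : Fin n → ℕ) (hp : ∀ i, 0 < p i) {H : ℕ}
    {δ : ℝ} (hδ0 : 0 ≤ δ) (hδ1 : δ ≤ 1) :
    ((H : ℝ)) ∈ T p H δ := by
  have hall : ∀ it ∈ (Finset.univ ×ˢ Finset.range H : Finset (Fin n × ℕ)),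
      ((it.2 : ℝ) + δ) / (p it.1 : ℝ) ≤ (H : ℝ) := by
    intro it hit
    have ht : it.2 < H := (Finset.mem_product.mp hit).2 |> Finset.mem_range.mp
    have hp1 : (1:ℝ) ≤ (p it.1 : ℝ) := by exact_mod_cast hp it.1
    have h0 : (0:ℝ) ≤ (it.2 : ℝ) + δ := by
      have : (0:ℝ) ≤ (it.2 : ℝ) := Nat.cast_nonneg _
      linarith
    calc ((it.2 : ℝ) + δ) / (p it.1 : ℝ) ≤ (it.2 : ℝ) + δ := div_le_self h0 hp1
      _ ≤ (H : ℝ) := by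
          have : (it.2 : ℝ) + 1 ≤ (H : ℝ) := by exact_mod_cast Nat.succ_le_of_lt ht
          linarith
  show (H:ℕ) ≤ _
  rw [Finset.filter_true_of_mem hall]
  rw [Finset.card_product, Finset.card_univ, Fintype.card_fin, Finset.card_range]
  exact Nat.le_mul_of_pos_left H hn


lemma lam_lt (hn : 1 ≤ n) (p : Fin n → ℕ) (hp : ∀ i, 0 < p i) {H : ℕ} (hH : 1 ≤ H)
    {δ δ' : ℝ} (h0 : 0 ≤ δ) (hlt : δ < δ') (h1 : δ' ≤ 1) :
    lambdaH p H δ < lambdaH p H δ' := by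
  set S : ℝ := ∑ j, (p j : ℝ) with hS
  have hSpos : 0 < S := by
    rw [hS]
    apply Finset.sum_pos
    · intro j _
      exact_mod_cast hp j
    · exact ⟨⟨0, hn⟩, Finset.mem_univ _⟩
  have hpS : ∀ i : Fin n, (p i : ℝ) ≤ S := by
    intro i
    rw [hS]
    apply Finset.single_le_sum (fun j _ => by positivity) (Finset.mem_univ i)
  set c : ℝ := (δ' - δ) / S with hc
  have hcpos : 0 < c := by
    rw [hc]; exact div_pos (by linarith) hSpos
  have key : ∀ lam ∈ T p H δ', lambdaH p H δ + c ≤ lam := by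
    intro lam hlam
    have hmem : lam - c ∈ T p H δ := by
      have hsub : ((Finset.univ ×ˢ Finset.range H).filter
          (fun it : Fin n × ℕ => ((it.2 : ℝ) + δ') / (p it.1 : ℝ) ≤ lam)) ⊆
          ((Finset.univ ×ˢ Finset.range H).filter
          (fun it : Fin n × ℕ => ((it.2 : ℝ) + δ) / (p it.1 : ℝ) ≤ lam - c)) := by
        intro it hit
        rw [Finset.mem_filter] at hit ⊢
        refine ⟨hit.1, ?_⟩
        have hppos : (0:ℝ) < (p it.1 : ℝ) := by exact_mod_cast hp it.1
        have heq : ((it.2 : ℝ) + δ) / (p it.1 : ℝ)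
            = ((it.2 : ℝ) + δ') / (p it.1 : ℝ) - (δ' - δ) / (p it.1 : ℝ) := by
          field_simp
          ring
        have hcle : c ≤ (δ' - δ) / (p it.1 : ℝ) := by
          rw [hc]
          apply div_le_div_of_nonneg_left (by linarith) hppos (hpS it.1)
        have := hit.2
        rw [heq]
        linarith
      have hcard := Finset.card_le_card hsub
      have hlam' : (H:ℕ) ≤ _ := hlam
      exact le_trans hlam' hcard
    have := csInf_le (T_bddBelow p hH h0) hmem
    rw [← lambdaH_eq] at this
    linarith
  have hne : (T p H δ').Nonempty := ⟨(H:ℝ), T_nonempty hn p hp (by linarith) h1⟩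
  have hfinal : lambdaH p H δ + c ≤ lambdaH p H δ' := by
    rw [lambdaH_eq p H δ']
    exact le_csInf hne key
  linarith

lemma lam_mem (hn : 1 ≤ n) (p : Fin n → ℕ) (hp : ∀ i, 0 < p i) {H : ℕ} (hH : 1 ≤ H)
    {δ : ℝ} (h0 : 0 ≤ δ) (h1 : δ ≤ 1) : lambdaH p H δ ∈ T p H δ := by
  set f : Fin n × ℕ → ℝ := fun it => ((it.2 : ℝ) + δ) / (p it.1 : ℝ) with hf
  set DD : Finset (Fin n × ℕ) := Finset.univ ×ˢ Finset.range H with hDD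
  have hDne : DD.Nonempty := ⟨(⟨0, hn⟩, 0), by
    rw [hDD, Finset.mem_product]
    exact ⟨Finset.mem_univ _, Finset.mem_range.mpr hH⟩⟩
  have hTmem : ∀ x : ℝ, (x ∈ T p H δ ↔ H ≤ (DD.filter (fun it => f it ≤ x)).card) := by
    intro x; rfl
  set W : Finset ℝ := (DD.image f).filter
      (fun x => H ≤ (DD.filter (fun it => f it ≤ x)).card) with hW
  have hWne : W.Nonempty := by
    refine ⟨(DD.image f).max' (hDne.image f), ?_⟩
    rw [hW, Finset.mem_filter]
    refine ⟨Finset.max'_mem _ _, ?_⟩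
    have heq : DD.filter (fun it => f it ≤ (DD.image f).max' (hDne.image f)) = DD := by
      apply Finset.filter_true_of_mem
      intro it hit
      exact Finset.le_max' _ _ (Finset.mem_image_of_mem f hit)
    rw [heq, hDD, Finset.card_product, Finset.card_univ, Fintype.card_fin, Finset.card_range]
    exact Nat.le_mul_of_pos_left H hn
  set v := W.min' hWne with hv
  have hvW : v ∈ W := Finset.min'_mem _ _
  have hvT : v ∈ T p H δ := (hTmem v).mpr (Finset.mem_filter.mp hvW).2
  have hTv : T p H δ = Set.Ici v := by
    ext lam
    rw [hTmem lam]
    constructor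
    · intro hcard
      have hFne : (DD.filter (fun it => f it ≤ lam)).Nonempty :=
        Finset.card_pos.mp (lt_of_lt_of_le hH hcard)
      obtain ⟨it0, hit0, hxval⟩ := Finset.mem_image.mp
        (Finset.max'_mem ((DD.filter (fun it => f it ≤ lam)).image f) (hFne.image f))
      have hmax : ∀ it ∈ DD.filter (fun it => f it ≤ lam), f it ≤ f it0 := by
        intro it hit
        rw [hxval]
        exact Finset.le_max' _ _ (Finset.mem_image_of_mem f hit)
      have hxle : f it0 ≤ lam := (Finset.mem_filter.mp hit0).2
      have hsub : DD.filter (fun it => f it ≤ lam) ⊆ DD.filter (fun it => f it ≤ f it0) := by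
        intro it hit
        exact Finset.mem_filter.mpr ⟨(Finset.filter_subset _ _) hit, hmax it hit⟩
      have hxW : f it0 ∈ W := by
        rw [hW, Finset.mem_filter]
        exact ⟨Finset.mem_image_of_mem f ((Finset.filter_subset _ _) hit0),
          le_trans hcard (Finset.card_le_card hsub)⟩
      exact le_trans (Finset.min'_le _ _ hxW) hxle
    · intro hlam
      have hsub : DD.filter (fun it => f it ≤ v) ⊆ DD.filter (fun it => f it ≤ lam) := by
        intro it hit
        rw [Finset.mem_filter] at hit ⊢
        exact ⟨hit.1, le_trans hit.2 hlam⟩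
      exact le_trans ((hTmem v).mp hvT) (Finset.card_le_card hsub)
  have : lambdaH p H δ = v := by
    rw [lambdaH_eq, hTv, csInf_Ici]
  rw [this]
  exact hvT

lemma card_lt_of_lt (p : Fin n → ℕ) {H : ℕ} (hH : 1 ≤ H) {δ x : ℝ} (h0 : 0 ≤ δ)
    (hx : x < lambdaH p H δ) :
    ((Finset.univ ×ˢ Finset.range H).filter
      (fun it : Fin n × ℕ => ((it.2 : ℝ) + δ) / (p it.1 : ℝ) ≤ x)).card < H := by
  by_contra hcon
  push_neg at hcon
  have hmem : x ∈ T p H δ := hcon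
  have := csInf_le (T_bddBelow p hH h0) hmem
  rw [← lambdaH_eq] at this
  linarith

lemma E_bound (hn : 1 ≤ n) (p : Fin n → ℕ) (hp : ∀ i, 0 < p i) {H : ℕ} (hH : 1 ≤ H) :
    ((Finset.univ ×ˢ Finset.range H).filter
      (fun it : Fin n × ℕ => ((it.2 : ℝ) + 1) / (p it.1 : ℝ) < lambdaH p H 1)).card < H := by
  by_contra hcon
  push_neg at hcon
  have hEne : ((Finset.univ ×ˢ Finset.range H).filter
      (fun it : Fin n × ℕ => ((it.2 : ℝ) + 1) / (p it.1 : ℝ) < lambdaH p H 1)).Nonempty :=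
    Finset.card_pos.mp (lt_of_lt_of_le hH hcon)
  obtain ⟨it0, hit0, hxval⟩ := Finset.mem_image.mp
    (Finset.max'_mem (((Finset.univ ×ˢ Finset.range H).filter
      (fun it : Fin n × ℕ => ((it.2 : ℝ) + 1) / (p it.1 : ℝ) < lambdaH p H 1)).image
        (fun it : Fin n × ℕ => ((it.2 : ℝ) + 1) / (p it.1 : ℝ))) (hEne.image _))
  have hxlt : ((it0.2 : ℝ) + 1) / (p it0.1 : ℝ) < lambdaH p H 1 :=
    (Finset.mem_filter.mp hit0).2
  have hsub : ((Finset.univ ×ˢ Finset.range H).filter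
      (fun it : Fin n × ℕ => ((it.2 : ℝ) + 1) / (p it.1 : ℝ) < lambdaH p H 1)) ⊆
      ((Finset.univ ×ˢ Finset.range H).filter
      (fun it : Fin n × ℕ => ((it.2 : ℝ) + 1) / (p it.1 : ℝ) ≤ ((it0.2 : ℝ) + 1) / (p it0.1 : ℝ))) := by
    intro it hit
    rw [Finset.mem_filter]
    refine ⟨(Finset.filter_subset _ _) hit, ?_⟩
    rw [hxval]
    exact Finset.le_max' _ _
      (Finset.mem_image_of_mem (fun it : Fin n × ℕ => ((it.2 : ℝ) + 1) / (p it.1 : ℝ)) hit)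
  have hlt := card_lt_of_lt p hH (zero_le_one)
    (x := ((it0.2 : ℝ) + 1) / (p it0.1 : ℝ)) hxlt
  have : (H:ℕ) ≤ ((Finset.univ ×ˢ Finset.range H).filter
      (fun it : Fin n × ℕ => ((it.2 : ℝ) + 1) / (p it.1 : ℝ) ≤ ((it0.2 : ℝ) + 1) / (p it0.1 : ℝ))).card :=
    le_trans hcon (Finset.card_le_card hsub)
  omega

end Stmt5Aux

/-- at most `2n−1` of the lines `δ ↦ (t+δ)/p_i` intersect `λ_H` on `[0,1]`. -/
theorem stmt_5 {n : ℕ} (hn : 1 ≤ n) (p : Fin n → ℕ) (hp : ∀ i, 0 < p i)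
    (H : ℕ) (hH : 1 ≤ H) :
    ((Finset.univ ×ˢ Finset.range H).filter
        (fun it : Fin n × ℕ => ∃ δ ∈ Set.Icc (0 : ℝ) 1,
          ((it.2 : ℝ) + δ) / (p it.1 : ℝ) = lambdaH p H δ)).card ≤ 2 * n - 1 := by
  classical
  open Stmt5Aux in
  set D : Finset (Fin n × ℕ) := Finset.univ ×ˢ Finset.range H with hD
  set A : Finset (Fin n × ℕ) := D.filter (fun it : Fin n × ℕ => ∃ δ ∈ Set.Icc (0:ℝ) 1,
      ((it.2 : ℝ) + δ) / (p it.1 : ℝ) ≤ lambdaH p H δ) with hA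
  set B : Finset (Fin n × ℕ) := D.filter (fun it : Fin n × ℕ => ∀ δ ∈ Set.Icc (0:ℝ) 1,
      ((it.2 : ℝ) + δ) / (p it.1 : ℝ) < lambdaH p H δ) with hB
  set E : Finset (Fin n × ℕ) := D.filter (fun it : Fin n × ℕ =>
      ((it.2 : ℝ) + 1) / (p it.1 : ℝ) < lambdaH p H 1) with hE
  set G : Finset (Fin n × ℕ) := D.filter (fun it : Fin n × ℕ =>
      ((it.2 : ℝ) + 0) / (p it.1 : ℝ) ≤ lambdaH p H 0) with hG
  have hmem0 : (0:ℝ) ∈ Set.Icc (0:ℝ) 1 := Set.mem_Icc.mpr ⟨le_rfl, zero_le_one⟩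
  -- B ⊆ A
  have hBA : B ⊆ A := by
    intro it hit
    rw [hB, Finset.mem_filter] at hit
    rw [hA, Finset.mem_filter]
    exact ⟨hit.1, 0, hmem0, le_of_lt (hit.2 0 hmem0)⟩
  -- touching set ⊆ A \ B
  have hTsub : D.filter (fun it : Fin n × ℕ => ∃ δ ∈ Set.Icc (0 : ℝ) 1,
      ((it.2 : ℝ) + δ) / (p it.1 : ℝ) = lambdaH p H δ) ⊆ A \ B := by
    intro it hit
    rw [Finset.mem_filter] at hit
    obtain ⟨hitD, δ₀, hδ₀, heq⟩ := hit
    rw [Finset.mem_sdiff]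
    constructor
    · rw [hA, Finset.mem_filter]
      exact ⟨hitD, δ₀, hδ₀, le_of_eq heq⟩
    · intro hitB
      rw [hB, Finset.mem_filter] at hitB
      have := hitB.2 δ₀ hδ₀
      rw [heq] at this
      exact lt_irrefl _ this
  -- card of E and G
  have hEcard : E.card < H := by
    rw [hE, hD]
    exact E_bound hn p hp hH
  have hGcard : H ≤ G.card := by
    rw [hG, hD]
    exact lam_mem hn p hp hH le_rfl zero_le_one
  -- splitting
  have hsplitA : (A.filter (fun it => it.2 = 0)).card
      + (A.filter (fun it => ¬ it.2 = 0)).card = A.card :=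
    Finset.card_filter_add_card_filter_not (fun it : Fin n × ℕ => it.2 = 0)
  have hsplitG : (G.filter (fun it => it.2 = 0)).card
      + (G.filter (fun it => ¬ it.2 = 0)).card = G.card :=
    Finset.card_filter_add_card_filter_not (fun it : Fin n × ℕ => it.2 = 0)
  -- zero parts are at most n
  have hzero : ∀ s : Finset (Fin n × ℕ), (s.filter (fun it => it.2 = 0)).card ≤ n := by
    intro s
    have := Finset.card_le_card_of_injOn (f := Prod.fst)
      (t := (Finset.univ : Finset (Fin n)))
      (s := s.filter (fun it => it.2 = 0))
      (fun a _ => Finset.mem_univ a.1) ?_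
    · simpa using this
    · intro a ha b hb hab
      have ha2 : a.2 = 0 := (Finset.mem_filter.mp (Finset.mem_coe.mp ha)).2
      have hb2 : b.2 = 0 := (Finset.mem_filter.mp (Finset.mem_coe.mp hb)).2
      exact Prod.ext hab (ha2.trans hb2.symm)
  -- A nonzero part injects into E
  have hA1 : (A.filter (fun it => ¬ it.2 = 0)).card ≤ E.card := by
    apply Finset.card_le_card_of_injOn (fun it : Fin n × ℕ => (it.1, it.2 - 1))
    · intro it hit
      rw [Finset.mem_coe, Finset.mem_filter] at hit
      obtain ⟨hitA, hne⟩ := hit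
      rw [hA, Finset.mem_filter] at hitA
      obtain ⟨hitD, δ, hδ, hle⟩ := hitA
      rw [hD, Finset.mem_product, Finset.mem_range] at hitD
      have h1t : 1 ≤ it.2 := Nat.one_le_iff_ne_zero.mpr hne
      obtain ⟨hδ0, hδ1⟩ := Set.mem_Icc.mp hδ
      have hppos : (0:ℝ) < (p it.1 : ℝ) := by exact_mod_cast hp it.1
      have hcast : ((it.2 - 1 : ℕ) : ℝ) + 1 = (it.2 : ℝ) := by
        rw [Nat.cast_sub h1t, Nat.cast_one]
        ring
      have hgoal : (it.2 : ℝ) / (p it.1 : ℝ) < lambdaH p H 1 := by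
        rcases eq_or_lt_of_le hδ1 with heq | hlt1
        · rw [heq] at hle
          have hstep : (it.2 : ℝ) / (p it.1 : ℝ) < ((it.2 : ℝ) + 1) / (p it.1 : ℝ) :=
            (div_lt_div_iff_of_pos_right hppos).mpr (by linarith)
          linarith
        · have hstep : (it.2 : ℝ) / (p it.1 : ℝ) ≤ ((it.2 : ℝ) + δ) / (p it.1 : ℝ) :=
            (div_le_div_iff_of_pos_right hppos).mpr (by linarith)
          have := lam_lt hn p hp hH hδ0 hlt1 le_rfl
          linarith
      rw [Finset.mem_coe, hE, Finset.mem_filter, hD, Finset.mem_product, Finset.mem_range]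
      dsimp only
      refine ⟨⟨Finset.mem_univ _, by omega⟩, ?_⟩
      rw [hcast]
      exact hgoal
    · intro a ha b hb hab
      have ha2 : ¬ a.2 = 0 := (Finset.mem_filter.mp (Finset.mem_coe.mp ha)).2
      have hb2 : ¬ b.2 = 0 := (Finset.mem_filter.mp (Finset.mem_coe.mp hb)).2
      simp only [Prod.mk.injEq] at hab
      exact Prod.ext hab.1 (by omega)
  -- G nonzero part injects into B
  have hG1 : (G.filter (fun it => ¬ it.2 = 0)).card ≤ B.card := by
    apply Finset.card_le_card_of_injOn (fun it : Fin n × ℕ => (it.1, it.2 - 1))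
    · intro it hit
      rw [Finset.mem_coe, Finset.mem_filter] at hit
      obtain ⟨hitG, hne⟩ := hit
      rw [hG, Finset.mem_filter] at hitG
      obtain ⟨hitD, hle⟩ := hitG
      rw [hD, Finset.mem_product, Finset.mem_range] at hitD
      have h1t : 1 ≤ it.2 := Nat.one_le_iff_ne_zero.mpr hne
      have hppos : (0:ℝ) < (p it.1 : ℝ) := by exact_mod_cast hp it.1
      have hcast : ((it.2 - 1 : ℕ) : ℝ) = (it.2 : ℝ) - 1 := by
        rw [Nat.cast_sub h1t, Nat.cast_one]
      have h1le : (1:ℝ) ≤ (it.2 : ℝ) := by exact_mod_cast h1t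
      rw [Finset.mem_coe, hB, Finset.mem_filter, hD, Finset.mem_product, Finset.mem_range]
      dsimp only
      refine ⟨⟨Finset.mem_univ _, by omega⟩, ?_⟩
      intro δ hδ
      obtain ⟨hδ0, hδ1⟩ := Set.mem_Icc.mp hδ
      rw [hcast]
      rcases eq_or_lt_of_le hδ0 with heq | hpos
      · rw [← heq]
        have hstep : ((it.2 : ℝ) - 1 + 0) / (p it.1 : ℝ) < ((it.2 : ℝ) + 0) / (p it.1 : ℝ) :=
          (div_lt_div_iff_of_pos_right hppos).mpr (by linarith)
        linarith
      · have hstep : ((it.2 : ℝ) - 1 + δ) / (p it.1 : ℝ) ≤ ((it.2 : ℝ) + 0) / (p it.1 : ℝ) :=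
          (div_le_div_iff_of_pos_right hppos).mpr (by linarith)
        have := lam_lt hn p hp hH le_rfl hpos hδ1
        linarith
    · intro a ha b hb hab
      have ha2 : ¬ a.2 = 0 := (Finset.mem_filter.mp (Finset.mem_coe.mp ha)).2
      have hb2 : ¬ b.2 = 0 := (Finset.mem_filter.mp (Finset.mem_coe.mp hb)).2
      simp only [Prod.mk.injEq] at hab
      exact Prod.ext hab.1 (by omega)
  -- final counting
  have hAB : (A \ B).card = A.card - B.card := Finset.card_sdiff_of_subset hBA
  have hBle : B.card ≤ A.card := Finset.card_le_card hBA
  have hT : (D.filter (fun it : Fin n × ℕ => ∃ δ ∈ Set.Icc (0 : ℝ) 1,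
      ((it.2 : ℝ) + δ) / (p it.1 : ℝ) = lambdaH p H δ)).card ≤ (A \ B).card :=
    Finset.card_le_card hTsub
  have hzA := hzero A
  have hzG := hzero G
  omega
end
end

section
/- Let ℓ_i(δ) = m_i·δ + c_i, i ∈ [n], be an arrangement of n distinct lines in general position (no three lines pass through a common point) with rational slopes m_i. Then there exists an arrangement ℓ'_i(δ) = m'_i·δ + c'_i, i ∈ [n], such that: (i) m'_i ∈ (1,2) for every i; (ii) c'_i/m'_i is a natural number for every i; and (iii) for every k ∈ {0,…,n−1}, the number of vertices of the k-level of the arrangement {ℓ_i} equals the number of vertices of the k-level of the arrangement {ℓ'_i}. -/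
open scoped Classical
open Set

noncomputable section

/-- The `k`-level of the arrangement of the `m` affine functions `δ ↦ a i * δ + b i`:
the `(k+1)`-st smallest of the values at `δ`. -/
def levelFun {m : ℕ} (a b : Fin m → ℝ) (k : ℕ) (δ : ℝ) : ℝ :=
  sInf {y : ℝ | k + 1 ≤ (Finset.univ.filter (fun i : Fin m => a i * δ + b i ≤ y)).card}

/-- A vertex of the `k`-level: a point where the level does not coincide with a single
affine function on any open neighborhood. -/
def IsVertex {m : ℕ} (a b : Fin m → ℝ) (k : ℕ) (δ : ℝ) : Prop :=
  ¬ ∃ (α β ε : ℝ), 0 < ε ∧ ∀ x ∈ Set.Ioo (δ - ε) (δ + ε), levelFun a b k x = α * x + β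

namespace Stmt9

variable {n : ℕ}

def val (M C : Fin n → ℝ) (i : Fin n) (x : ℝ) : ℝ := M i * x + C i

def cLe (M C : Fin n → ℝ) (x y : ℝ) : ℕ :=
  (Finset.univ.filter fun i => val M C i x ≤ y).card

def cLt (M C : Fin n → ℝ) (x y : ℝ) : ℕ :=
  (Finset.univ.filter fun i => val M C i x < y).card

def GenPos (M C : Fin n → ℝ) : Prop :=
  (∀ i j, i ≠ j → (M i, C i) ≠ (M j, C j)) ∧
  ∀ i j l : Fin n, i ≠ j → j ≠ l → i ≠ l →
    ¬ ∃ x : ℝ, val M C i x = val M C j x ∧ val M C j x = val M C l x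

def HasCross (M C : Fin n → ℝ) (k : ℕ) (x : ℝ) : Prop :=
  ∃ i j : Fin n, i ≠ j ∧ val M C i x = val M C j x ∧
    (cLt M C x (val M C i x) = k ∨ cLt M C x (val M C i x) + 1 = k)

def crossX (M C : Fin n → ℝ) (i j : Fin n) : ℝ := (C j - C i) / (M i - M j)

def depth (M C : Fin n → ℝ) (i j : Fin n) : ℕ :=
  cLt M C (crossX M C i j) (val M C i (crossX M C i j))

def pairs (M C : Fin n → ℝ) (k : ℕ) : Finset (Fin n × Fin n) :=
  Finset.univ.filter fun p => p.1 < p.2 ∧ M p.1 ≠ M p.2 ∧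
    (depth M C p.1 p.2 = k ∨ depth M C p.1 p.2 + 1 = k)

def Dq (M C : Fin n → ℝ) (i j l : Fin n) : ℝ :=
  val M C l (crossX M C i j) - val M C i (crossX M C i j)

lemma levelFun_def (M C : Fin n → ℝ) (k : ℕ) (x : ℝ) :
    levelFun M C k x = sInf {y : ℝ | k + 1 ≤ cLe M C x y} := rfl

lemma level_eq (M C : Fin n → ℝ) {k : ℕ} {x : ℝ} {i : Fin n}
    (h1 : k + 1 ≤ cLe M C x (val M C i x)) (h2 : cLt M C x (val M C i x) ≤ k) :
    levelFun M C k x = val M C i x := by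
  have hset : {y : ℝ | k + 1 ≤ cLe M C x y} = Set.Ici (val M C i x) := by
    ext y
    simp only [Set.mem_setOf_eq, Set.mem_Ici]
    constructor
    · intro hy
      by_contra hlt
      push_neg at hlt
      have hsub : (Finset.univ.filter fun l => val M C l x ≤ y) ⊆
          Finset.univ.filter fun l => val M C l x < val M C i x := by
        intro l hl
        simp only [Finset.mem_filter, Finset.mem_univ, true_and] at hl ⊢
        exact lt_of_le_of_lt hl hlt
      have hc := Finset.card_le_card hsub
      unfold cLe at hy
      unfold cLt at h2
      omega
    · intro hy
      refine le_trans h1 (Finset.card_le_card ?_)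
      intro l hl
      simp only [Finset.mem_filter, Finset.mem_univ, true_and] at hl ⊢
      exact hl.trans hy
  rw [levelFun_def, hset, csInf_Ici]

lemma exists_idx (M C : Fin n → ℝ) {k : ℕ} (hk : k < n) (x : ℝ) :
    ∃ i, k + 1 ≤ cLe M C x (val M C i x) ∧ cLt M C x (val M C i x) ≤ k := by
  have hne : (Finset.univ : Finset (Fin n)).Nonempty :=
    ⟨⟨0, lt_of_le_of_lt (Nat.zero_le k) hk⟩, Finset.mem_univ _⟩
  obtain ⟨j₀, -, hj₀⟩ := Finset.exists_max_image Finset.univ (fun j => val M C j x) hne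
  set T : Finset (Fin n) := Finset.univ.filter fun j => k + 1 ≤ cLe M C x (val M C j x) with hT
  have hj₀T : j₀ ∈ T := by
    have : (Finset.univ.filter fun l => val M C l x ≤ val M C j₀ x) = Finset.univ := by
      apply Finset.eq_univ_of_forall
      intro l
      simp only [Finset.mem_filter, Finset.mem_univ, true_and]
      exact hj₀ l (Finset.mem_univ l)
    simp only [hT, Finset.mem_filter, Finset.mem_univ, true_and]
    unfold cLe
    rw [this]
    simpa using hk
  obtain ⟨i, hiT, hi⟩ := Finset.exists_min_image T (fun j => val M C j x) ⟨j₀, hj₀T⟩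
  simp only [hT, Finset.mem_filter, Finset.mem_univ, true_and] at hiT
  refine ⟨i, hiT, ?_⟩
  by_contra hcon
  push_neg at hcon
  have hpos : (Finset.univ.filter fun l => val M C l x < val M C i x).Nonempty := by
    rw [← Finset.card_pos]
    unfold cLt at hcon
    omega
  obtain ⟨j, hjmem, hj⟩ := Finset.exists_max_image _ (fun l => val M C l x) hpos
  simp only [Finset.mem_filter, Finset.mem_univ, true_and] at hjmem
  have hjT : j ∈ T := by
    simp only [hT, Finset.mem_filter, Finset.mem_univ, true_and]
    have hcon2 : k + 1 ≤ (Finset.univ.filter fun l => val M C l x < val M C i x).card := hcon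
    unfold cLe
    refine le_trans hcon2 (Finset.card_le_card ?_)
    intro l hl
    simp only [Finset.mem_filter, Finset.mem_univ, true_and] at hl ⊢
    exact hj l (by simp only [Finset.mem_filter, Finset.mem_univ, true_and]; exact hl)
  have := hi j hjT
  exact absurd hjmem (not_lt.mpr this)

lemma crossX_symm (M C : Fin n → ℝ) (i j : Fin n) : crossX M C j i = crossX M C i j := by
  unfold crossX
  rw [← neg_sub (C j) (C i), ← neg_sub (M i) (M j), neg_div_neg_eq]

lemma val_crossX {M C : Fin n → ℝ} {i j : Fin n} (h : M i ≠ M j) :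
    val M C i (crossX M C i j) = val M C j (crossX M C i j) := by
  have h' : M i - M j ≠ 0 := sub_ne_zero.mpr h
  unfold val crossX
  field_simp
  ring

lemma eq_crossX {M C : Fin n → ℝ} {i j : Fin n} {x : ℝ} (h : M i ≠ M j)
    (hv : val M C i x = val M C j x) : x = crossX M C i j := by
  have h' : M i - M j ≠ 0 := sub_ne_zero.mpr h
  unfold val at hv
  unfold crossX
  field_simp
  linarith

lemma slope_ne' {M C : Fin n → ℝ} (h : GenPos M C) {i j : Fin n} {x : ℝ}
    (hij : i ≠ j) (hv : val M C i x = val M C j x) : M i ≠ M j := by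
  intro hM
  have hC : C i = C j := by
    unfold val at hv
    rw [hM] at hv
    linarith
  exact h.1 i j hij (by rw [hM, hC])

lemma sign_stable {m1 c1 m2 c2 δ x : ℝ} (h : m1 * δ + c1 < m2 * δ + c2)
    (hx : |m1 - m2| * |x - δ| < (m2 * δ + c2) - (m1 * δ + c1)) :
    m1 * x + c1 < m2 * x + c2 := by
  have h1 : (m1 - m2) * (x - δ) ≤ |m1 - m2| * |x - δ| := by
    calc (m1 - m2) * (x - δ) ≤ |(m1 - m2) * (x - δ)| := le_abs_self _
    _ = |m1 - m2| * |x - δ| := abs_mul _ _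
  nlinarith

lemma mul_div_lt2 {g d D : ℝ} (hg : 0 < g) (hd : 0 ≤ d) (hdD : d ≤ D) :
    d * (g / (D + 1)) < g := by
  have h0 : (0:ℝ) ≤ D := le_trans hd hdD
  have h1 : 0 < g / (D + 1) := div_pos hg (by linarith)
  have h2 : g / (D + 1) * (D + 1) = g := div_mul_cancel₀ _ (by linarith)
  nlinarith

lemma level_near (M C : Fin n → ℝ) {k : ℕ} {i j : Fin n} {δ₀ x : ℝ}
    (hij : i ≠ j)
    (hval : val M C i δ₀ = val M C j δ₀)
    (hsep : ∀ l, l ≠ i → l ≠ j →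
      (val M C l δ₀ < val M C i δ₀ → val M C l x < val M C i x ∧ val M C l x < val M C j x) ∧
      (val M C i δ₀ < val M C l δ₀ → val M C i x < val M C l x ∧ val M C j x < val M C l x) ∧
      val M C l δ₀ ≠ val M C i δ₀)
    (hd : cLt M C δ₀ (val M C i δ₀) = k ∨ cLt M C δ₀ (val M C i δ₀) + 1 = k)
    (hx : val M C i x ≤ val M C j x) :
    levelFun M C k x = if cLt M C δ₀ (val M C i δ₀) = k then val M C i x else val M C j x := by
  set d := cLt M C δ₀ (val M C i δ₀) with hdd
  set B : Finset (Fin n) := Finset.univ.filter (fun l => val M C l δ₀ < val M C i δ₀) with hBB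
  have hBcard : B.card = d := rfl
  have hiB : i ∉ B := by simp [hBB]
  have hjB : j ∉ B := by simp [hBB, hval.le]
  have F1 : (Finset.univ.filter fun l => val M C l x < val M C i x) = B := by
    ext l
    simp only [hBB, Finset.mem_filter, Finset.mem_univ, true_and]
    by_cases hli : l = i
    · subst hli; simp
    by_cases hlj : l = j
    · subst hlj
      constructor
      · intro h; exact absurd h (not_lt.mpr hx)
      · intro h; exact absurd h (not_lt.mpr hval.le)
    obtain ⟨h1, h2, h3⟩ := hsep l hli hlj
    constructor
    · intro h
      by_contra h'
      have hgt : val M C i δ₀ < val M C l δ₀ := lt_of_le_of_ne (not_lt.mp h') (Ne.symm h3)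
      exact absurd h (not_lt.mpr (h2 hgt).1.le)
    · intro h; exact (h1 h).1
  have F2 : (Finset.univ.filter fun l => val M C l x < val M C j x) ⊆ insert i B := by
    intro l hl
    simp only [Finset.mem_filter, Finset.mem_univ, true_and] at hl
    by_cases hli : l = i
    · rw [hli]; exact Finset.mem_insert_self i B
    by_cases hlj : l = j
    · exact absurd hl (by simp [hlj])
    obtain ⟨h1, h2, h3⟩ := hsep l hli hlj
    have : val M C l δ₀ < val M C i δ₀ := by
      by_contra h'
      have hgt : val M C i δ₀ < val M C l δ₀ := lt_of_le_of_ne (not_lt.mp h') (Ne.symm h3)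
      exact absurd hl (not_lt.mpr (h2 hgt).2.le)
    apply Finset.mem_insert_of_mem
    simp only [hBB, Finset.mem_filter, Finset.mem_univ, true_and]
    exact this
  have F3 : insert i (insert j B) ⊆ (Finset.univ.filter fun l => val M C l x ≤ val M C j x) := by
    intro l hl
    simp only [Finset.mem_insert] at hl
    simp only [Finset.mem_filter, Finset.mem_univ, true_and]
    rcases hl with h | h | h
    · subst h; exact hx
    · subst h; exact le_refl _
    · simp only [hBB, Finset.mem_filter, Finset.mem_univ, true_and] at h
      exact ((hsep l (by rintro rfl; exact absurd h (by simp)) (by rintro rfl; exact absurd h (by simp [hval.le])) ).1 h).2.le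
  have F4 : insert i B ⊆ (Finset.univ.filter fun l => val M C l x ≤ val M C i x) := by
    intro l hl
    rcases Finset.mem_insert.mp hl with h | h
    · subst h; simp
    · simp only [Finset.mem_filter, Finset.mem_univ, true_and]
      rw [← F1] at h
      simp only [Finset.mem_filter, Finset.mem_univ, true_and] at h
      exact h.le
  have cardF4 : (insert i B).card = d + 1 := by rw [Finset.card_insert_of_notMem hiB, hBcard]
  have cardF3 : (insert i (insert j B)).card = d + 2 := by
    rw [Finset.card_insert_of_notMem (by simp [hij, hiB]), Finset.card_insert_of_notMem hjB, hBcard]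
  rcases hd with hd1 | hd2
  · rw [if_pos hd1]
    apply level_eq
    · unfold cLe
      calc k + 1 = d + 1 := by omega
      _ = (insert i B).card := cardF4.symm
      _ ≤ _ := Finset.card_le_card F4
    · unfold cLt
      rw [F1, hBcard]; omega
  · rw [if_neg (by omega)]
    apply level_eq
    · unfold cLe
      calc k + 1 = d + 2 := by omega
      _ = (insert i (insert j B)).card := cardF3.symm
      _ ≤ _ := Finset.card_le_card F3
    · unfold cLt
      calc (Finset.univ.filter fun l => val M C l x < val M C j x).card
          ≤ (insert i B).card := Finset.card_le_card F2
      _ = d + 1 := cardF4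
      _ ≤ k := by omega

lemma cross_vertex (M C : Fin n → ℝ) (hgp : GenPos M C) {k : ℕ} {i j : Fin n} {δ₀ : ℝ}
    (hij : i ≠ j) (hM : M i < M j) (hval : val M C i δ₀ = val M C j δ₀)
    (hd : cLt M C δ₀ (val M C i δ₀) = k ∨ cLt M C δ₀ (val M C i δ₀) + 1 = k) :
    IsVertex M C k δ₀ := by
  rintro ⟨α, β, ε', hε', haff⟩
  have hKne : ∀ l, l ≠ i → l ≠ j → val M C l δ₀ ≠ val M C i δ₀ := by
    intro l hli hlj hcon
    exact hgp.2 i j l hij (Ne.symm hlj) (Ne.symm hli)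
      ⟨δ₀, hval, by rw [← hval]; exact hcon.symm⟩
  set εf : Fin n → ℝ := fun l => if l = i ∨ l = j then 1 else
    |val M C l δ₀ - val M C i δ₀| / (|M l - M i| + |M l - M j| + 1) with hεf
  have huniv : (Finset.univ : Finset (Fin n)).Nonempty := ⟨i, Finset.mem_univ _⟩
  set ε : ℝ := min ε' (Finset.univ.inf' huniv εf) with hε
  have hεpos : 0 < ε := by
    rw [hε]
    apply lt_min hε'
    rw [Finset.lt_inf'_iff]
    intro l _
    rw [hεf]
    dsimp only
    by_cases h : l = i ∨ l = j
    · rw [if_pos h]; norm_num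
    · rw [if_neg h]
      push_neg at h
      apply div_pos
      · exact abs_pos.mpr (sub_ne_zero.mpr (hKne l h.1 h.2))
      · positivity
  have hεle : ε ≤ ε' := min_le_left _ _
  have hsepx : ∀ x : ℝ, |x - δ₀| < ε → ∀ l, l ≠ i → l ≠ j →
      (val M C l δ₀ < val M C i δ₀ → val M C l x < val M C i x ∧ val M C l x < val M C j x) ∧
      (val M C i δ₀ < val M C l δ₀ → val M C i x < val M C l x ∧ val M C j x < val M C l x) ∧
      val M C l δ₀ ≠ val M C i δ₀ := by
    intro x hx l hli hlj
    have h3 := hKne l hli hlj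
    set g : ℝ := |val M C l δ₀ - val M C i δ₀| with hg
    have hgpos : 0 < g := abs_pos.mpr (sub_ne_zero.mpr h3)
    set D : ℝ := |M l - M i| + |M l - M j| with hD
    have hεfl : εf l = g / (D + 1) := by
      rw [hεf]; dsimp only; rw [if_neg (not_or.mpr ⟨hli, hlj⟩), hg, hD]
    have hxl : |x - δ₀| < g / (D + 1) := by
      calc |x - δ₀| < ε := hx
      _ ≤ Finset.univ.inf' huniv εf := min_le_right _ _
      _ ≤ εf l := Finset.inf'_le _ (Finset.mem_univ l)
      _ = g / (D + 1) := hεfl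
    have hb1 : |M l - M i| * |x - δ₀| < g := by
      calc |M l - M i| * |x - δ₀| ≤ |M l - M i| * (g / (D + 1)) :=
            mul_le_mul_of_nonneg_left hxl.le (abs_nonneg _)
      _ < g := mul_div_lt2 hgpos (abs_nonneg _)
            (by rw [hD]; exact le_add_of_nonneg_right (abs_nonneg _))
    have hb2 : |M l - M j| * |x - δ₀| < g := by
      calc |M l - M j| * |x - δ₀| ≤ |M l - M j| * (g / (D + 1)) :=
            mul_le_mul_of_nonneg_left hxl.le (abs_nonneg _)
      _ < g := mul_div_lt2 hgpos (abs_nonneg _)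
            (by rw [hD]; exact le_add_of_nonneg_left (abs_nonneg _))
    refine ⟨?_, ?_, h3⟩
    · intro hlt
      have hgap1 : M i * δ₀ + C i - (M l * δ₀ + C l) = g := by
        have : val M C i δ₀ - val M C l δ₀ = g := by
          rw [hg, abs_of_neg (sub_neg.mpr hlt)]; ring
        exact this
      have hltj : val M C l δ₀ < val M C j δ₀ := by rw [← hval]; exact hlt
      have hgapj : M j * δ₀ + C j - (M l * δ₀ + C l) = g := by
        have : val M C j δ₀ - val M C l δ₀ = g := by rw [← hval]; exact hgap1
        exact this
      constructor
      · exact sign_stable (show M l * δ₀ + C l < M i * δ₀ + C i from hlt)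
          (by rw [hgap1]; exact hb1)
      · exact sign_stable (show M l * δ₀ + C l < M j * δ₀ + C j from hltj)
          (by rw [hgapj]; exact hb2)
    · intro hgt
      have hgap1 : M l * δ₀ + C l - (M i * δ₀ + C i) = g := by
        have : val M C l δ₀ - val M C i δ₀ = g := by rw [hg, abs_of_pos (sub_pos.mpr hgt)]
        exact this
      have hgtj : val M C j δ₀ < val M C l δ₀ := by rw [← hval]; exact hgt
      have hgapj : M l * δ₀ + C l - (M j * δ₀ + C j) = g := by
        have hvv : val M C j δ₀ = val M C i δ₀ := hval.symm
        have : val M C l δ₀ - val M C j δ₀ = g := by rw [hvv]; exact hgap1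
        exact this
      constructor
      · exact sign_stable (show M i * δ₀ + C i < M l * δ₀ + C l from hgt)
          (by rw [abs_sub_comm (M i) (M l), hgap1]; exact hb1)
      · exact sign_stable (show M j * δ₀ + C j < M l * δ₀ + C l from hgtj)
          (by rw [abs_sub_comm (M j) (M l), hgapj]; exact hb2)
  have habs1 : |δ₀ - ε / 2 - δ₀| < ε := by
    rw [show δ₀ - ε / 2 - δ₀ = -(ε / 2) by ring, abs_neg, abs_of_pos (by linarith)]
    linarith
  have habs2 : |δ₀ + ε / 2 - δ₀| < ε := by
    rw [show δ₀ + ε / 2 - δ₀ = ε / 2 by ring, abs_of_pos (by linarith)]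
    linarith
  have habs0 : |δ₀ - δ₀| < ε := by simpa using hεpos
  have hvx1 : val M C j (δ₀ - ε / 2) < val M C i (δ₀ - ε / 2) := by
    have hv : M i * δ₀ + C i = M j * δ₀ + C j := hval
    show M j * (δ₀ - ε / 2) + C j < M i * (δ₀ - ε / 2) + C i
    nlinarith [mul_pos (sub_pos.mpr hM) hεpos]
  have hvx2 : val M C i (δ₀ + ε / 2) < val M C j (δ₀ + ε / 2) := by
    have hv : M i * δ₀ + C i = M j * δ₀ + C j := hval
    show M i * (δ₀ + ε / 2) + C i < M j * (δ₀ + ε / 2) + C j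
    nlinarith [mul_pos (sub_pos.mpr hM) hεpos]
  have hd' : cLt M C δ₀ (val M C j δ₀) = k ∨ cLt M C δ₀ (val M C j δ₀) + 1 = k := by
    rw [← hval]; exact hd
  have hsep' : ∀ x : ℝ, |x - δ₀| < ε → ∀ l, l ≠ j → l ≠ i →
      (val M C l δ₀ < val M C j δ₀ → val M C l x < val M C j x ∧ val M C l x < val M C i x) ∧
      (val M C j δ₀ < val M C l δ₀ → val M C j x < val M C l x ∧ val M C i x < val M C l x) ∧
      val M C l δ₀ ≠ val M C j δ₀ := by
    intro x hx l hlj hli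
    obtain ⟨h1, h2, h3⟩ := hsepx x hx l hli hlj
    refine ⟨?_, ?_, ?_⟩
    · intro h; rw [← hval] at h; exact ⟨(h1 h).2, (h1 h).1⟩
    · intro h; rw [← hval] at h; exact ⟨(h2 h).2, (h2 h).1⟩
    · rw [← hval]; exact h3
  have L0 := level_near M C hij hval (hsepx δ₀ habs0) hd hval.le
  have L2 := level_near M C hij hval (hsepx (δ₀ + ε / 2) habs2) hd hvx2.le
  have L1 := level_near M C hij.symm hval.symm (hsep' (δ₀ - ε / 2) habs1) hd' hvx1.le
  have hcond : cLt M C δ₀ (val M C j δ₀) = cLt M C δ₀ (val M C i δ₀) := by rw [hval]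
  rw [hcond] at L1
  have hmem0 : δ₀ ∈ Set.Ioo (δ₀ - ε') (δ₀ + ε') := by constructor <;> linarith
  have hmem1 : δ₀ - ε / 2 ∈ Set.Ioo (δ₀ - ε') (δ₀ + ε') := by constructor <;> linarith
  have hmem2 : δ₀ + ε / 2 ∈ Set.Ioo (δ₀ - ε') (δ₀ + ε') := by constructor <;> linarith
  have E0 := haff δ₀ hmem0
  have E1 := haff (δ₀ - ε / 2) hmem1
  have E2 := haff (δ₀ + ε / 2) hmem2
  have hne1 : δ₀ - ε / 2 - δ₀ ≠ 0 := by intro h; rw [show δ₀ - ε/2 - δ₀ = -(ε/2) by ring] at h; linarith [neg_eq_zero.mp h]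
  have hne2 : δ₀ + ε / 2 - δ₀ ≠ 0 := by intro h; rw [show δ₀ + ε/2 - δ₀ = ε/2 by ring] at h; linarith
  by_cases hcase : cLt M C δ₀ (val M C i δ₀) = k
  · rw [if_pos hcase] at L0 L1 L2
    have e0 : α * δ₀ + β = M j * δ₀ + C j := by
      rw [← E0, L0, hval]; rfl
    have e1 : α * (δ₀ - ε / 2) + β = M j * (δ₀ - ε / 2) + C j := by
      rw [← E1, L1]; rfl
    have e0i : α * δ₀ + β = M i * δ₀ + C i := by rw [← E0, L0]; rfl
    have e2 : α * (δ₀ + ε / 2) + β = M i * (δ₀ + ε / 2) + C i := by rw [← E2, L2]; rfl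
    have hαj : (α - M j) * (δ₀ - ε / 2 - δ₀) = 0 := by linear_combination e1 - e0
    have hαi : (α - M i) * (δ₀ + ε / 2 - δ₀) = 0 := by linear_combination e2 - e0i
    have haj : α = M j := by
      rcases mul_eq_zero.mp hαj with h | h
      · linarith [sub_eq_zero.mp h]
      · exact absurd h hne1
    have hai : α = M i := by
      rcases mul_eq_zero.mp hαi with h | h
      · linarith [sub_eq_zero.mp h]
      · exact absurd h hne2
    rw [haj] at hai; linarith
  · rw [if_neg hcase] at L0 L1 L2
    have e0 : α * δ₀ + β = M i * δ₀ + C i := by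
      rw [← E0, L0, ← hval]; rfl
    have e1 : α * (δ₀ - ε / 2) + β = M i * (δ₀ - ε / 2) + C i := by
      rw [← E1, L1]; rfl
    have e0j : α * δ₀ + β = M j * δ₀ + C j := by rw [← E0, L0]; rfl
    have e2 : α * (δ₀ + ε / 2) + β = M j * (δ₀ + ε / 2) + C j := by rw [← E2, L2]; rfl
    have hαi : (α - M i) * (δ₀ - ε / 2 - δ₀) = 0 := by linear_combination e1 - e0
    have hαj : (α - M j) * (δ₀ + ε / 2 - δ₀) = 0 := by linear_combination e2 - e0j
    have hai : α = M i := by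
      rcases mul_eq_zero.mp hαi with h | h
      · linarith [sub_eq_zero.mp h]
      · exact absurd h hne1
    have haj : α = M j := by
      rcases mul_eq_zero.mp hαj with h | h
      · linarith [sub_eq_zero.mp h]
      · exact absurd h hne2
    rw [hai] at haj; linarith

lemma not_vertex (M C : Fin n → ℝ) (hgp : GenPos M C) {k : ℕ} (hk : k < n) {δ₀ : ℝ}
    (hnc : ¬ HasCross M C k δ₀) : ¬ IsVertex M C k δ₀ := by
  rw [IsVertex, not_not]
  obtain ⟨i, h1, h2⟩ := exists_idx M C hk δ₀
  have huniq : ∀ l, l ≠ i → val M C l δ₀ ≠ val M C i δ₀ := by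
    intro l hl hcon
    have hsub : (Finset.univ.filter fun p => val M C p δ₀ ≤ val M C i δ₀) ⊆
        insert i (insert l (Finset.univ.filter fun p => val M C p δ₀ < val M C i δ₀)) := by
      intro p hp
      simp only [Finset.mem_filter, Finset.mem_univ, true_and] at hp
      by_cases hpi : p = i
      · simp [hpi]
      by_cases hpl : p = l
      · simp [hpl]
      rcases lt_or_eq_of_le hp with hlt | heq
      · simp only [Finset.mem_insert, Finset.mem_filter, Finset.mem_univ, true_and]
        exact Or.inr (Or.inr hlt)
      · exact absurd ⟨δ₀, hcon, heq.symm⟩ (hgp.2 l i p hl (Ne.symm hpi) (Ne.symm hpl))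
    have hcard : cLe M C δ₀ (val M C i δ₀) ≤ cLt M C δ₀ (val M C i δ₀) + 2 := by
      unfold cLe cLt
      calc (Finset.univ.filter fun p => val M C p δ₀ ≤ val M C i δ₀).card
          ≤ (insert i (insert l (Finset.univ.filter fun p => val M C p δ₀ < val M C i δ₀))).card :=
            Finset.card_le_card hsub
      _ ≤ (insert l (Finset.univ.filter fun p => val M C p δ₀ < val M C i δ₀)).card + 1 :=
            Finset.card_insert_le _ _
      _ ≤ (Finset.univ.filter fun p => val M C p δ₀ < val M C i δ₀).card + 1 + 1 := by
            have := Finset.card_insert_le l (Finset.univ.filter fun p => val M C p δ₀ < val M C i δ₀)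
            omega
      _ = _ := by omega
    exact hnc ⟨i, l, Ne.symm hl, hcon.symm, by omega⟩
  set εf : Fin n → ℝ := fun l => if l = i then 1 else
    |val M C l δ₀ - val M C i δ₀| / (|M l - M i| + 1) with hεf
  have huniv : (Finset.univ : Finset (Fin n)).Nonempty := ⟨i, Finset.mem_univ _⟩
  set ε : ℝ := Finset.univ.inf' huniv εf with hε
  have hεpos : 0 < ε := by
    rw [hε, Finset.lt_inf'_iff]
    intro l _
    rw [hεf]; dsimp only
    by_cases h : l = i
    · rw [if_pos h]; norm_num
    · rw [if_neg h]
      exact div_pos (abs_pos.mpr (sub_ne_zero.mpr (huniq l h))) (by positivity)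
  refine ⟨M i, C i, ε, hεpos, ?_⟩
  intro x hx
  have habs : |x - δ₀| < ε := abs_sub_lt_iff.mpr ⟨by linarith [hx.2], by linarith [hx.1]⟩
  have hsgn : ∀ l, l ≠ i →
      (val M C l δ₀ < val M C i δ₀ → val M C l x < val M C i x) ∧
      (val M C i δ₀ < val M C l δ₀ → val M C i x < val M C l x) := by
    intro l hl
    have h3 := huniq l hl
    set g : ℝ := |val M C l δ₀ - val M C i δ₀| with hg
    have hgpos : 0 < g := abs_pos.mpr (sub_ne_zero.mpr h3)
    have hxl : |x - δ₀| < g / (|M l - M i| + 1) := by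
      calc |x - δ₀| < ε := habs
      _ ≤ εf l := Finset.inf'_le _ (Finset.mem_univ l)
      _ = g / (|M l - M i| + 1) := by rw [hεf]; dsimp only; rw [if_neg hl, hg]
    have hb1 : |M l - M i| * |x - δ₀| < g :=
      calc |M l - M i| * |x - δ₀| ≤ |M l - M i| * (g / (|M l - M i| + 1)) :=
            mul_le_mul_of_nonneg_left hxl.le (abs_nonneg _)
      _ < g := mul_div_lt2 hgpos (abs_nonneg _) le_rfl
    constructor
    · intro hlt
      have hgap : M i * δ₀ + C i - (M l * δ₀ + C l) = g := by
        have : val M C i δ₀ - val M C l δ₀ = g := by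
          rw [hg, abs_of_neg (sub_neg.mpr hlt)]; ring
        exact this
      exact sign_stable (show M l * δ₀ + C l < M i * δ₀ + C i from hlt)
        (by rw [hgap]; exact hb1)
    · intro hgt
      have hgap : M l * δ₀ + C l - (M i * δ₀ + C i) = g := by
        have : val M C l δ₀ - val M C i δ₀ = g := by rw [hg, abs_of_pos (sub_pos.mpr hgt)]
        exact this
      exact sign_stable (show M i * δ₀ + C i < M l * δ₀ + C l from hgt)
        (by rw [abs_sub_comm (M i) (M l), hgap]; exact hb1)
  have Flt : (Finset.univ.filter fun l => val M C l x < val M C i x) =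
      (Finset.univ.filter fun l => val M C l δ₀ < val M C i δ₀) := by
    ext l
    simp only [Finset.mem_filter, Finset.mem_univ, true_and]
    by_cases hl : l = i
    · subst hl; simp
    obtain ⟨ha, hb⟩ := hsgn l hl
    constructor
    · intro h
      by_contra h'
      have : val M C i δ₀ < val M C l δ₀ :=
        lt_of_le_of_ne (not_lt.mp h') (Ne.symm (huniq l hl))
      exact absurd h (not_lt.mpr (hb this).le)
    · exact ha
  have Fle : (Finset.univ.filter fun l => val M C l x ≤ val M C i x) =
      insert i (Finset.univ.filter fun l => val M C l δ₀ < val M C i δ₀) := by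
    ext l
    simp only [Finset.mem_insert, Finset.mem_filter, Finset.mem_univ, true_and]
    by_cases hl : l = i
    · subst hl; simp
    obtain ⟨ha, hb⟩ := hsgn l hl
    constructor
    · intro h
      right
      by_contra h'
      have : val M C i δ₀ < val M C l δ₀ :=
        lt_of_le_of_ne (not_lt.mp h') (Ne.symm (huniq l hl))
      exact absurd h (not_le.mpr (hb this))
    · intro h
      rcases h with h | h
      · exact absurd h hl
      · exact (ha h).le
  have hiNmem : i ∉ (Finset.univ.filter fun l => val M C l δ₀ < val M C i δ₀) := by simp
  have hle0 : cLe M C δ₀ (val M C i δ₀) ≤ cLt M C δ₀ (val M C i δ₀) + 1 := by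
    unfold cLe cLt
    calc (Finset.univ.filter fun p => val M C p δ₀ ≤ val M C i δ₀).card
        ≤ (insert i (Finset.univ.filter fun p => val M C p δ₀ < val M C i δ₀)).card := by
          apply Finset.card_le_card
          intro p hp
          simp only [Finset.mem_filter, Finset.mem_univ, true_and] at hp
          by_cases hpi : p = i
          · simp [hpi]
          · simp only [Finset.mem_insert, Finset.mem_filter, Finset.mem_univ, true_and]
            exact Or.inr (lt_of_le_of_ne hp (huniq p hpi))
    _ ≤ _ := Finset.card_insert_le _ _
  have hdk : cLt M C δ₀ (val M C i δ₀) = k := by omega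
  have hlev : levelFun M C k x = val M C i x := by
    apply level_eq
    · unfold cLe
      rw [Fle, Finset.card_insert_of_notMem hiNmem]
      have : (Finset.univ.filter fun l => val M C l δ₀ < val M C i δ₀).card
          = cLt M C δ₀ (val M C i δ₀) := rfl
      omega
    · unfold cLt
      rw [Flt]
      have : (Finset.univ.filter fun l => val M C l δ₀ < val M C i δ₀).card
          = cLt M C δ₀ (val M C i δ₀) := rfl
      omega
  exact hlev

lemma vertex_iff (M C : Fin n → ℝ) (hgp : GenPos M C) {k : ℕ} (hk : k < n) {δ : ℝ} :
    IsVertex M C k δ ↔ HasCross M C k δ := by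
  constructor
  · intro h
    by_contra hnc
    exact not_vertex M C hgp hk hnc h
  · rintro ⟨i, j, hij, hval, hd⟩
    rcases (slope_ne' hgp hij hval).lt_or_gt with h | h
    · exact cross_vertex M C hgp hij h hval hd
    · exact cross_vertex M C hgp hij.symm h hval.symm (by rw [← hval]; exact hd)

lemma vertexSet_eq (M C : Fin n → ℝ) (hgp : GenPos M C) {k : ℕ} (hk : k < n) :
    {δ : ℝ | IsVertex M C k δ} =
      ↑((pairs M C k).image fun p => crossX M C p.1 p.2) := by
  ext δ
  simp only [Set.mem_setOf_eq, Finset.coe_image, Set.mem_image, Finset.mem_coe]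
  rw [vertex_iff M C hgp hk]
  constructor
  · rintro ⟨i, j, hij, hval, hd⟩
    have hM := slope_ne' hgp hij hval
    have hδ : δ = crossX M C i j := eq_crossX hM hval
    rcases hij.lt_or_gt with hlt | hlt
    · refine ⟨(i, j), ?_, hδ.symm⟩
      simp only [pairs, Finset.mem_coe, Finset.mem_filter, Finset.mem_univ, true_and]
      refine ⟨hlt, hM, ?_⟩
      have hdp : depth M C i j = cLt M C δ (val M C i δ) := by rw [depth, ← hδ]
      rw [hdp]; exact hd
    · refine ⟨(j, i), ?_, by rw [crossX_symm]; exact hδ.symm⟩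
      simp only [pairs, Finset.mem_coe, Finset.mem_filter, Finset.mem_univ, true_and]
      refine ⟨hlt, Ne.symm hM, ?_⟩
      have hdp : depth M C j i = cLt M C δ (val M C j δ) := by
        rw [depth, crossX_symm, ← hδ]
      rw [hdp, ← hval]; exact hd
  · rintro ⟨p, hp, hδ⟩
    simp only [pairs, Finset.mem_coe, Finset.mem_filter, Finset.mem_univ, true_and] at hp
    obtain ⟨hlt, hM, hd⟩ := hp
    refine ⟨p.1, p.2, hlt.ne, ?_, ?_⟩
    · rw [← hδ]; exact val_crossX hM
    · rw [← hδ]; exact hd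

lemma depth_gap (M C : Fin n → ℝ) (hgp : GenPos M C) {k : ℕ} {p q : Fin n × Fin n}
    (hp : p ∈ pairs M C k) (hq : q ∈ pairs M C k)
    (hxy : crossX M C p.1 p.2 = crossX M C q.1 q.2)
    (hlt : val M C p.1 (crossX M C p.1 p.2) < val M C q.1 (crossX M C p.1 p.2)) : False := by
  simp only [pairs, Finset.mem_filter, Finset.mem_univ, true_and] at hp hq
  obtain ⟨hpo, hpM, hpd⟩ := hp
  obtain ⟨hqo, hqM, hqd⟩ := hq
  set δ := crossX M C p.1 p.2 with hδ
  have hvp2 : val M C p.2 δ = val M C p.1 δ := (val_crossX hpM).symm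
  have hd2 : depth M C q.1 q.2 = cLt M C δ (val M C q.1 δ) := by
    rw [depth, ← hxy]
  have hsub : insert p.1 (insert p.2
      (Finset.univ.filter fun l => val M C l δ < val M C p.1 δ)) ⊆
      Finset.univ.filter fun l => val M C l δ < val M C q.1 δ := by
    intro l hl
    simp only [Finset.mem_insert, Finset.mem_filter, Finset.mem_univ, true_and] at hl ⊢
    rcases hl with h | h | h
    · rw [h]; exact hlt
    · rw [h, hvp2]; exact hlt
    · exact h.trans hlt
  have hp2nm : p.2 ∉ (Finset.univ.filter fun l => val M C l δ < val M C p.1 δ) := by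
    simp [hvp2]
  have hp1nm : p.1 ∉ insert p.2 (Finset.univ.filter fun l => val M C l δ < val M C p.1 δ) := by
    simp only [Finset.mem_insert, Finset.mem_filter, Finset.mem_univ, true_and]
    push_neg
    exact ⟨hpo.ne, le_refl _⟩
  have hcard := Finset.card_le_card hsub
  rw [Finset.card_insert_of_notMem hp1nm, Finset.card_insert_of_notMem hp2nm] at hcard
  have e1 : (Finset.univ.filter fun l => val M C l δ < val M C p.1 δ).card
      = depth M C p.1 p.2 := rfl
  have e2 : (Finset.univ.filter fun l => val M C l δ < val M C q.1 δ).card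
      = depth M C q.1 q.2 := by rw [hd2]; rfl
  omega

lemma pairs_inj (M C : Fin n → ℝ) (hgp : GenPos M C) {k : ℕ} :
    Set.InjOn (fun p : Fin n × Fin n => crossX M C p.1 p.2) ↑(pairs M C k) := by
  intro p hp q hq heq
  simp only [Finset.mem_coe] at hp hq
  have hxy : crossX M C p.1 p.2 = crossX M C q.1 q.2 := heq
  set δ := crossX M C p.1 p.2 with hδ
  have hpmem := hp
  have hqmem := hq
  simp only [pairs, Finset.mem_filter, Finset.mem_univ, true_and] at hpmem hqmem
  obtain ⟨hpo, hpM, -⟩ := hpmem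
  obtain ⟨hqo, hqM, -⟩ := hqmem
  rcases lt_trichotomy (val M C p.1 δ) (val M C q.1 δ) with hv | hv | hv
  · exact absurd (depth_gap M C hgp hp hq hxy hv) (by simp)
  · -- equal values: all four lines pass through (δ, y)
    have hvp2 : val M C p.2 δ = val M C p.1 δ := (val_crossX hpM).symm
    have hvq1 : val M C q.1 δ = val M C p.1 δ := hv.symm
    have hvq2 : val M C q.2 δ = val M C p.1 δ := by
      have := val_crossX (M := M) (C := C) hqM
      rw [← hxy] at this
      rw [← this]; exact hvq1
    have key : ∀ r : Fin n, r ≠ p.1 → r ≠ p.2 → val M C r δ = val M C p.1 δ → False := by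
      intro r h1 h2 hvr
      exact hgp.2 p.1 p.2 r hpo.ne (Ne.symm h2) (Ne.symm h1)
        ⟨δ, hvp2.symm, hvp2.trans hvr.symm⟩
    by_cases h1 : q.1 = p.1
    · by_cases h2 : q.2 = p.2
      · exact Prod.ext h1.symm h2.symm
      · have hne : q.2 ≠ p.1 := by
          rw [← h1]; exact ne_of_gt hqo
        exact absurd (key q.2 hne h2 hvq2) (by simp)
    · by_cases h1' : q.1 = p.2
      · have hq2p1 : q.2 ≠ p.1 := by
          intro h
          rw [h1', h] at hqo
          exact absurd hqo (not_lt.mpr hpo.le)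
        have hq2p2 : q.2 ≠ p.2 := by rw [← h1']; exact ne_of_gt hqo
        exact absurd (key q.2 hq2p1 hq2p2 hvq2) (by simp)
      · exact absurd (key q.1 h1 h1' hvq1) (by simp)
  · exact absurd (depth_gap M C hgp hq hp hxy.symm (by rw [← hxy]; exact hv)) (by simp)

lemma ncard_vertex (M C : Fin n → ℝ) (hgp : GenPos M C) {k : ℕ} (hk : k < n) :
    {δ : ℝ | IsVertex M C k δ}.ncard = (pairs M C k).card := by
  rw [vertexSet_eq M C hgp hk, Set.ncard_coe_finset,
    Finset.card_image_of_injOn (pairs_inj M C hgp)]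

lemma Dq_self (M C : Fin n → ℝ) (i j : Fin n) : Dq M C i j i = 0 := sub_self _

lemma Dq_snd {M C : Fin n → ℝ} {i j : Fin n} (h : M i ≠ M j) : Dq M C i j j = 0 := by
  rw [Dq, ← val_crossX h, sub_self]

lemma D_formula (M C : Fin n → ℝ) (i j l : Fin n) :
    Dq M C i j l = (M l - M i) * ((C j - C i) / (M i - M j)) + (C l - C i) := by
  unfold Dq val crossX
  ring

lemma depth_eq_filter (M C : Fin n → ℝ) (i j : Fin n) :
    depth M C i j = (Finset.univ.filter fun l => Dq M C i j l < 0).card := by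
  unfold depth cLt Dq
  congr 1
  ext l
  simp [sub_neg]

lemma D_affine (m c : Fin n → ℝ) (a b L β : ℝ) (ha : a ≠ 0) {i j : Fin n}
    (hm : m i ≠ m j) (l : Fin n) :
    Dq (fun i => a * m i + b) (fun i => L * c i + β) i j l = L * Dq m c i j l := by
  have h1 : m i - m j ≠ 0 := sub_ne_zero.mpr hm
  unfold Dq val crossX
  dsimp only
  have h2 : a * m i + b - (a * m j + b) = a * (m i - m j) := by ring
  have h3 : L * c j + β - (L * c i + β) = L * (c j - c i) := by ring
  rw [h2, h3]
  field_simp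
  ring

lemma depth_affine (m c : Fin n → ℝ) (a b L β : ℝ) (ha : 0 < a) (hL : 0 < L)
    {i j : Fin n} (hm : m i ≠ m j) :
    depth (fun i => a * m i + b) (fun i => L * c i + β) i j = depth m c i j := by
  rw [depth_eq_filter, depth_eq_filter]
  congr 1
  ext l
  simp only [Finset.mem_filter, Finset.mem_univ, true_and]
  rw [D_affine m c a b L β ha.ne' hm l]
  constructor
  · intro h
    by_contra h'
    push_neg at h'
    exact absurd h (not_lt.mpr (mul_nonneg hL.le h'))
  · intro h
    exact mul_neg_of_pos_of_neg hL h

lemma pairs_affine (m c : Fin n → ℝ) (a b L β : ℝ) (ha : 0 < a) (hL : 0 < L) (k : ℕ) :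
    pairs (fun i => a * m i + b) (fun i => L * c i + β) k = pairs m c k := by
  ext p
  simp only [pairs, Finset.mem_filter, Finset.mem_univ, true_and]
  have hslope : (fun i => a * m i + b) p.1 ≠ (fun i => a * m i + b) p.2 ↔ m p.1 ≠ m p.2 := by
    dsimp only
    constructor
    · intro h h'; exact h (by rw [h'])
    · intro h h'
      apply h
      have : a * m p.1 = a * m p.2 := by linarith
      exact mul_left_cancel₀ ha.ne' this
  by_cases hm : m p.1 = m p.2
  · constructor
    · rintro ⟨h1, h2, h3⟩; exact absurd hm (hslope.mp h2)
    · rintro ⟨h1, h2, h3⟩; exact absurd hm h2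
  · have hdep := depth_affine m c a b L β ha hL (i := p.1) (j := p.2) hm
    rw [hdep]
    constructor
    · rintro ⟨h1, h2, h3⟩; exact ⟨h1, hm, h3⟩
    · rintro ⟨h1, h2, h3⟩; exact ⟨h1, hslope.mpr hm, h3⟩

lemma val_eq_parallel {M C : Fin n → ℝ} {i j : Fin n} {x : ℝ} (hM : M i = M j)
    (hv : val M C i x = val M C j x) : C i = C j := by
  unfold val at hv
  rw [hM] at hv
  linarith

lemma genpos_perturb (M C' : Fin n → ℝ)
    (HA : ∀ i j, i ≠ j → M i = M j → C' i ≠ C' j)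
    (HB : ∀ i j l : Fin n, i ≠ j → M i ≠ M j → l ≠ i → l ≠ j → Dq M C' i j l ≠ 0) :
    GenPos M C' := by
  constructor
  · intro i j hij heq
    by_cases hM : M i = M j
    · exact HA i j hij hM (congrArg Prod.snd heq)
    · exact hM (congrArg Prod.fst heq)
  · rintro i j l hij hjl hil ⟨x, h1, h2⟩
    by_cases hM : M i = M j
    · exact HA i j hij hM (val_eq_parallel hM h1)
    · have hx : x = crossX M C' i j := eq_crossX hM h1
      apply HB i j l hij hM (Ne.symm hil) (Ne.symm hjl)
      rw [Dq, ← hx, h1, h2, sub_self]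
    
lemma pairs_eq_perturb (M C C' : Fin n → ℝ)
    (HB : ∀ i j l : Fin n, i ≠ j → M i ≠ M j → l ≠ i → l ≠ j →
      ((0 < Dq M C i j l ↔ 0 < Dq M C' i j l) ∧ Dq M C i j l ≠ 0 ∧ Dq M C' i j l ≠ 0))
    (k : ℕ) : pairs M C' k = pairs M C k := by
  ext p
  simp only [pairs, Finset.mem_filter, Finset.mem_univ, true_and]
  by_cases hM : M p.1 = M p.2
  · constructor
    · rintro ⟨h1, h2, h3⟩; exact absurd hM h2
    · rintro ⟨h1, h2, h3⟩; exact absurd hM h2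
  · have hdep : depth M C' p.1 p.2 = depth M C p.1 p.2 := by
      rw [depth_eq_filter, depth_eq_filter]
      congr 1
      ext l
      simp only [Finset.mem_filter, Finset.mem_univ, true_and]
      by_cases hl1 : l = p.1
      · rw [hl1, Dq_self, Dq_self]
      by_cases hl2 : l = p.2
      · rw [hl2, Dq_snd hM, Dq_snd hM]
      by_cases hp12 : p.1 = p.2
      · exact absurd hp12 (fun h => hM (by rw [h]))
      obtain ⟨hiff, hne, hne'⟩ := HB p.1 p.2 l hp12 hM hl1 hl2
      constructor
      · intro h
        rcases lt_trichotomy (Dq M C p.1 p.2 l) 0 with h' | h' | h'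
        · exact h'
        · exact absurd h' hne
        · exact absurd (hiff.mp h') (not_lt.mpr h.le)
      · intro h
        rcases lt_trichotomy (Dq M C' p.1 p.2 l) 0 with h' | h' | h'
        · exact h'
        · exact absurd h' hne'
        · exact absurd (hiff.mpr h') (not_lt.mpr h.le)
    rw [hdep]

lemma Dq_diff_bound (M C C' : Fin n → ℝ) {i j : Fin n} (hM : M i ≠ M j)
    (hpert : ∀ t, |C' t - C t| ≤ 1) (l : Fin n) :
    |Dq M C' i j l - Dq M C i j l| ≤ 2 + |M l - M i| * 2 / |M i - M j| := by
  have hMne : M i - M j ≠ 0 := sub_ne_zero.mpr hM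
  have hMpos : 0 < |M i - M j| := abs_pos.mpr hMne
  have hiden : Dq M C' i j l - Dq M C i j l =
      (M l - M i) * (((C' j - C j) - (C' i - C i)) / (M i - M j))
      + ((C' l - C l) - (C' i - C i)) := by
    rw [D_formula, D_formula]
    field_simp
    ring
  rw [hiden]
  have h1 : |(C' j - C j) - (C' i - C i)| ≤ 2 := by
    calc |(C' j - C j) - (C' i - C i)| ≤ |C' j - C j| + |C' i - C i| := abs_sub _ _
    _ ≤ 2 := by linarith [hpert j, hpert i]
  have h2 : |(C' l - C l) - (C' i - C i)| ≤ 2 := by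
    calc |(C' l - C l) - (C' i - C i)| ≤ |C' l - C l| + |C' i - C i| := abs_sub _ _
    _ ≤ 2 := by linarith [hpert l, hpert i]
  calc |(M l - M i) * (((C' j - C j) - (C' i - C i)) / (M i - M j))
        + ((C' l - C l) - (C' i - C i))|
      ≤ |(M l - M i) * (((C' j - C j) - (C' i - C i)) / (M i - M j))|
        + |(C' l - C l) - (C' i - C i)| := abs_add_le _ _
    _ ≤ |M l - M i| * (2 / |M i - M j|) + 2 := by
        apply add_le_add _ h2
        rw [abs_mul, abs_div]
        gcongr
    _ = 2 + |M l - M i| * 2 / |M i - M j| := by ring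

end Stmt9

open Stmt9 in
/-- any line arrangement in general position with rational slopes can be
transformed into one with slopes in `(1,2)` and `c'_i/m'_i ∈ ℕ`, preserving the number of
vertices of every `k`-level. -/
theorem stmt_9 {n : ℕ} (hn : 1 ≤ n) (m c : Fin n → ℝ)
    (hdist : ∀ i j : Fin n, i ≠ j → (m i, c i) ≠ (m j, c j))
    (hgen : ∀ i j k : Fin n, i ≠ j → j ≠ k → i ≠ k →
      ¬ ∃ δ : ℝ, m i * δ + c i = m j * δ + c j ∧ m j * δ + c j = m k * δ + c k)
    (hrat : ∀ i, ∃ q : ℚ, m i = (q : ℝ)) :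
    ∃ m' c' : Fin n → ℝ,
      (∀ i, m' i ∈ Set.Ioo (1 : ℝ) 2) ∧
      (∀ i, ∃ t : ℕ, c' i / m' i = (t : ℝ)) ∧
      (∀ k : ℕ, k < n →
        {δ : ℝ | IsVertex m c k δ}.ncard = {δ : ℝ | IsVertex m' c' k δ}.ncard) := by
  classical
  have hn0 : 0 < n := hn
  have hgpmc : GenPos m c := ⟨hdist, fun i j l h1 h2 h3 => hgen i j l h1 h2 h3⟩
  have hne : (Finset.univ : Finset (Fin n)).Nonempty := ⟨⟨0, hn0⟩, Finset.mem_univ _⟩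
  set R : ℝ := Finset.univ.sup' hne (fun i => |m i|) with hR
  have hRb : ∀ i, |m i| ≤ R := fun i => by rw [hR]; exact Finset.le_sup' (fun i => |m i|) (Finset.mem_univ i)
  have hRnn : 0 ≤ R := by have h := hRb ⟨0, hn0⟩; have h2 := abs_nonneg (m ⟨0, hn0⟩); linarith
  set a : ℝ := 1 / (4 * (R + 1)) with ha'
  have ha : 0 < a := by rw [ha']; positivity
  set M : Fin n → ℝ := fun i => a * m i + 3/2 with hM'
  have hM12 : ∀ i, M i ∈ Set.Ioo (1:ℝ) 2 := by
    intro i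
    have h1 : |a * m i| ≤ 1/4 := by
      rw [abs_mul, abs_of_pos ha]
      calc a * |m i| ≤ a * R := mul_le_mul_of_nonneg_left (hRb i) ha.le
      _ ≤ 1/4 := by
          rw [ha']
          rw [div_mul_eq_mul_div, one_mul, div_le_div_iff₀ (by positivity) (by norm_num)]
          linarith
    have h2 := abs_le.mp h1
    constructor
    · show (1:ℝ) < a * m i + 3/2; linarith [h2.1]
    · show a * m i + 3/2 < (2:ℝ); linarith [h2.2]
  have hMslope : ∀ i j : Fin n, M i ≠ M j ↔ m i ≠ m j := by
    intro i j
    constructor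
    · intro h h'; exact h (by simp only [hM', h'])
    · intro h h'
      apply h
      simp only [hM'] at h'
      have : a * m i = a * m j := by linarith
      exact mul_left_cancel₀ ha.ne' this
  -- nonvanishing of Dq m c at genuine triples
  have hDmc : ∀ i j l : Fin n, i ≠ j → m i ≠ m j → l ≠ i → l ≠ j → Dq m c i j l ≠ 0 := by
    intro i j l hij hm hli hlj hD
    have hvij : val m c i (crossX m c i j) = val m c j (crossX m c i j) := val_crossX hm
    have hvil : val m c i (crossX m c i j) = val m c l (crossX m c i j) := by
      rw [Dq, sub_eq_zero] at hD
      exact hD.symm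
    exact hgen i j l hij (fun h => hlj h.symm) (fun h => hli h.symm)
      ⟨crossX m c i j, hvij, by show val m c j (crossX m c i j) = val m c l (crossX m c i j); rw [← hvij]; exact hvil⟩
  -- the big scaling constant
  set KK : Fin n × Fin n × Fin n → ℝ := fun t =>
    if t.1 ≠ t.2.1 ∧ m t.1 ≠ m t.2.1 ∧ t.2.2 ≠ t.1 ∧ t.2.2 ≠ t.2.1 then
      (2 + |M t.2.2 - M t.1| * 2 / |M t.1 - M t.2.1|) / |Dq m c t.1 t.2.1 t.2.2|
    else if t.1 ≠ t.2.1 ∧ m t.1 = m t.2.1 then 2 / |c t.1 - c t.2.1|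
    else 0 with hKK
  have hne3 : (Finset.univ : Finset (Fin n × Fin n × Fin n)).Nonempty :=
    ⟨(⟨0, hn0⟩, ⟨0, hn0⟩, ⟨0, hn0⟩), Finset.mem_univ _⟩
  set L : ℝ := 1 + Finset.univ.sup' hne3 KK with hL'
  have hKnn : ∀ t, 0 ≤ KK t := by
    intro t
    rw [hKK]
    dsimp only
    split_ifs
    · positivity
    · positivity
    · exact le_refl 0
  have hLb : ∀ t, KK t + 1 ≤ L := by
    intro t
    rw [hL']
    have h := Finset.le_sup' KK (Finset.mem_univ t)
    linarith
  have hL1 : 1 ≤ L := by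
    have := hKnn (⟨0, hn0⟩, ⟨0, hn0⟩, ⟨0, hn0⟩)
    have := hLb (⟨0, hn0⟩, ⟨0, hn0⟩, ⟨0, hn0⟩)
    linarith
  have hL0 : 0 < L := by linarith
  set cm : ℝ := Finset.univ.sup' hne (fun i => |c i|) with hcm
  have hcb : ∀ i, |c i| ≤ cm := fun i => by rw [hcm]; exact Finset.le_sup' (fun i => |c i|) (Finset.mem_univ i)
  set β : ℝ := L * (cm + 1) with hβ'
  set C : Fin n → ℝ := fun i => L * c i + β with hC'
  have hCpos : ∀ i, L ≤ C i := by
    intro i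
    have h1 : -cm ≤ c i := neg_le_of_abs_le (hcb i)
    have : C i = L * (c i + cm + 1) := by rw [hC', hβ']; ring
    rw [this]
    calc L = L * 1 := (mul_one L).symm
    _ ≤ L * (c i + cm + 1) := mul_le_mul_of_nonneg_left (by linarith) hL0.le
  have hMpos : ∀ i, 0 < M i := fun i => lt_trans one_pos (hM12 i).1
  set t : Fin n → ℕ := fun i => ⌊C i / M i + 1/2⌋₊ with ht'
  set C' : Fin n → ℝ := fun i => M i * t i with hC''
  clear_value C' t C β cm L KK M a R
  have hpert : ∀ i, |C' i - C i| ≤ 1 := by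
    intro i
    have h2 := (hM12 i).2
    have h1 := (hM12 i).1
    have hMp := hMpos i
    have hrnn : 0 ≤ C i / M i + 1/2 := by
      have h3 := hCpos i
      have : 0 ≤ C i / M i := div_nonneg (by linarith) hMp.le
      linarith
    have hfl : (t i : ℝ) ≤ C i / M i + 1/2 := by
      rw [ht']; exact Nat.floor_le hrnn
    have hfg : C i / M i + 1/2 < (t i : ℝ) + 1 := by
      rw [ht']; exact Nat.lt_floor_add_one _
    have hdiv : M i * (C i / M i) = C i := mul_div_cancel₀ _ hMp.ne'
    have e : M i * (C i / M i + 1/2) = C i + M i / 2 := by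
      rw [mul_add, hdiv]; ring
    have f1 : M i * ((t i : ℝ) + 1) = M i * (t i : ℝ) + M i := by ring
    have f2 : M i * (C i / M i + 1/2) < M i * ((t i : ℝ) + 1) :=
      mul_lt_mul_of_pos_left hfg hMp
    have f3 : M i * (t i : ℝ) ≤ M i * (C i / M i + 1/2) :=
      mul_le_mul_of_nonneg_left hfl hMp.le
    have hCg : C' i = M i * (t i : ℝ) := by rw [hC'']
    rw [hCg, abs_le]
    constructor
    · linarith
    · linarith
  refine ⟨M, C', hM12, ?_, ?_⟩
  · intro i
    refine ⟨t i, ?_⟩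
    have hCg : C' i = M i * (t i : ℝ) := by rw [hC'']
    rw [hCg, mul_comm, mul_div_assoc, div_self (hMpos i).ne', mul_one]
  · intro k hk
    have HA : ∀ i j, i ≠ j → M i = M j → C' i ≠ C' j := by
      intro i j hij hMeq hcon
      have hmeq : m i = m j := by
        by_contra h
        exact (hMslope i j).mpr h hMeq
      have hcne : c i ≠ c j := by
        intro h
        exact hdist i j hij (by rw [hmeq, h])
      have habsc : 0 < |c i - c j| := abs_pos.mpr (sub_ne_zero.mpr hcne)
      have hKval : KK (i, j, i) = 2 / |c i - c j| := by
        rw [hKK]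
        dsimp only
        rw [if_neg (by push_neg; intro _ h; exact absurd hmeq h), if_pos ⟨hij, hmeq⟩]
      have hKt := hLb (i, j, i)
      rw [hKval] at hKt
      have hgap : 2 < L * |c i - c j| := by
        have h1 : (2 / |c i - c j|) * |c i - c j| = 2 := div_mul_cancel₀ _ habsc.ne'
        nlinarith
      have hCd : C i - C j = L * (c i - c j) := by rw [hC']; ring
      have habsC : |C i - C j| = L * |c i - c j| := by
        rw [hCd, abs_mul, abs_of_pos hL0]
      have htriangle : |C i - C j| ≤ 2 := by
        have h1 : C i - C j = (C i - C' i) + (C' j - C j) := by rw [hcon]; ring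
        calc |C i - C j| = |(C i - C' i) + (C' j - C j)| := by rw [h1]
        _ ≤ |C i - C' i| + |C' j - C j| := abs_add_le _ _
        _ ≤ 2 := by
            have := hpert i
            have := hpert j
            rw [abs_sub_comm] at this
            -- careful: hpert i : |C' i - C i| ≤ 1
            linarith [hpert i, hpert j, (abs_sub_comm (C i) (C' i)) ▸ (hpert i)]
      rw [habsC] at htriangle
      linarith
    have HB : ∀ i j l : Fin n, i ≠ j → M i ≠ M j → l ≠ i → l ≠ j →
        ((0 < Dq M C i j l ↔ 0 < Dq M C' i j l) ∧ Dq M C i j l ≠ 0 ∧ Dq M C' i j l ≠ 0) := by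
      intro i j l hij hMne hli hlj
      have hm : m i ≠ m j := (hMslope i j).mp hMne
      have hDne : Dq m c i j l ≠ 0 := hDmc i j l hij hm hli hlj
      have hDaff : Dq M C i j l = L * Dq m c i j l := by
        rw [hM', hC']
        exact D_affine m c a (3/2) L β ha.ne' hm l
      have hKval : KK (i, j, l) = (2 + |M l - M i| * 2 / |M i - M j|) / |Dq m c i j l| := by
        rw [hKK]
        dsimp only
        rw [if_pos ⟨hij, hm, hli, hlj⟩]
      have hKt := hLb (i, j, l)
      rw [hKval] at hKt
      have habsD : 0 < |Dq m c i j l| := abs_pos.mpr hDne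
      have hKnumnn : (0:ℝ) ≤ 2 + |M l - M i| * 2 / |M i - M j| := by positivity
      have hLK : (2 + |M l - M i| * 2 / |M i - M j|) + |Dq m c i j l| ≤ L * |Dq m c i j l| := by
        have h1 : ((2 + |M l - M i| * 2 / |M i - M j|) / |Dq m c i j l|) * |Dq m c i j l|
            = 2 + |M l - M i| * 2 / |M i - M j| := div_mul_cancel₀ _ habsD.ne'
        nlinarith
      have hDD : |Dq M C i j l| = L * |Dq m c i j l| := by
        rw [hDaff, abs_mul, abs_of_pos hL0]
      have hdiff : |Dq M C' i j l - Dq M C i j l| ≤ 2 + |M l - M i| * 2 / |M i - M j| :=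
        Dq_diff_bound M C C' hMne hpert l
      have hgap : |Dq M C' i j l - Dq M C i j l| < |Dq M C i j l| := by
        rw [hDD]; linarith
      have hne'' : Dq M C i j l ≠ 0 := by
        rw [hDaff]; exact mul_ne_zero hL0.ne' hDne
      refine ⟨⟨?_, ?_⟩, hne'', ?_⟩
      · intro h
        rw [abs_of_pos h] at hgap
        have h1 := neg_abs_le (Dq M C' i j l - Dq M C i j l)
        linarith
      · intro h
        by_contra h'
        push_neg at h'
        have hlt : Dq M C i j l < 0 := lt_of_le_of_ne h' hne''
        rw [abs_of_neg hlt] at hgap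
        have h1 := le_abs_self (Dq M C' i j l - Dq M C i j l)
        linarith
      · intro h0
        rw [h0, zero_sub, abs_neg] at hgap
        exact lt_irrefl _ hgap
    have hgpC' : GenPos M C' :=
      genpos_perturb M C' HA (fun i j l h1 h2 h3 h4 => (HB i j l h1 h2 h3 h4).2.2)
    have e1 : pairs M C k = pairs m c k := by
      rw [hM', hC']
      exact pairs_affine m c a (3/2) L β ha hL0 k
    have e2 : pairs M C' k = pairs M C k := pairs_eq_perturb M C C' HB k
    rw [ncard_vertex m c hgpmc hk, ncard_vertex M C' hgpC' hk, e2, e1]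
end
end

section
/- Let a, b, c, d be strictly positive reals with a < b, c < d, and (a,b) ≠ (c,d). Then the set {q ∈ ℝ : q > 0 and a^q + b^q = c^q + d^q} has at most one element. -/
open Real Set

/-- For `S > 0` and `s > 1`, the map `x ↦ (S-x)^s + x^s` is strictly monotone on `[S/2, S]`. -/
lemma stmt10_gmono (S s : ℝ) (hS : 0 < S) (hs : 1 < s) :
    StrictMonoOn (fun x : ℝ => (S - x) ^ s + x ^ s) (Set.Icc (S / 2) S) := by
  have hs0 : (0:ℝ) < s := lt_trans one_pos hs
  apply strictMonoOn_of_deriv_pos (convex_Icc _ _)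
  · apply ContinuousOn.add
    · exact (Real.continuous_rpow_const hs0.le).comp (continuous_const.sub continuous_id) |>.continuousOn
    · exact (Real.continuous_rpow_const hs0.le).continuousOn
  · intro x hx
    rw [interior_Icc] at hx
    obtain ⟨hx1, hx2⟩ := hx
    have hSx : 0 < S - x := by linarith
    have hxpos : 0 < x := by linarith
    have h1 : HasDerivAt (fun y : ℝ => (S - y) ^ s) (s * (S - x) ^ (s - 1) * (-1)) x := by
      have hinner : HasDerivAt (fun y : ℝ => S - y) (-1) x := (hasDerivAt_id x).const_sub S
      exact (Real.hasDerivAt_rpow_const (Or.inl hSx.ne')).comp x hinner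
    have h2 : HasDerivAt (fun y : ℝ => y ^ s) (s * x ^ (s - 1)) x :=
      Real.hasDerivAt_rpow_const (Or.inl hxpos.ne')
    have h : HasDerivAt (fun y : ℝ => (S - y) ^ s + y ^ s) (s * (S - x) ^ (s - 1) * (-1) + s * x ^ (s - 1)) x := h1.add h2
    rw [h.deriv]
    have hlt : (S - x) ^ (s - 1) < x ^ (s - 1) :=
      Real.rpow_lt_rpow hSx.le (by linarith) (by linarith)
    nlinarith [Real.rpow_pos_of_pos hSx (s-1), Real.rpow_pos_of_pos hxpos (s-1)]

lemma stmt10_key (a b c d p r : ℝ) (ha : 0 < a) (hb : 0 < b) (hc : 0 < c) (hd : 0 < d)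
    (hab : a < b) (hcd : c < d) (hp : 0 < p) (hpr : p < r)
    (h1 : a ^ p + b ^ p = c ^ p + d ^ p) (h2 : a ^ r + b ^ r = c ^ r + d ^ r) :
    a = c ∧ b = d := by
  set S := a ^ p + b ^ p with hSdef
  have hap : 0 < a ^ p := Real.rpow_pos_of_pos ha p
  have hbp : 0 < b ^ p := Real.rpow_pos_of_pos hb p
  have hcp : 0 < c ^ p := Real.rpow_pos_of_pos hc p
  have hdp : 0 < d ^ p := Real.rpow_pos_of_pos hd p
  have habp : a ^ p < b ^ p := Real.rpow_lt_rpow ha.le hab hp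
  have hcdp : c ^ p < d ^ p := Real.rpow_lt_rpow hc.le hcd hp
  have hS : 0 < S := by positivity
  set s := r / p with hsdef
  have hs : 1 < s := (one_lt_div hp).2 hpr
  have hps : p * s = r := by rw [hsdef]; field_simp
  have hmono := stmt10_gmono S s hS hs
  have hbmem : b ^ p ∈ Set.Icc (S / 2) S := ⟨by simp only [hSdef]; linarith, by simp only [hSdef]; linarith⟩
  have hdmem : d ^ p ∈ Set.Icc (S / 2) S := ⟨by simp only [hSdef, h1]; linarith, by simp only [hSdef, h1]; linarith⟩
  have hrw : ∀ x : ℝ, 0 < x → (x ^ p) ^ s = x ^ r := by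
    intro x hx
    rw [← Real.rpow_mul hx.le, hps]
  have hgb : (S - b ^ p) ^ s + (b ^ p) ^ s = a ^ r + b ^ r := by
    have : S - b ^ p = a ^ p := by simp [hSdef]
    rw [this, hrw a ha, hrw b hb]
  have hgd : (S - d ^ p) ^ s + (d ^ p) ^ s = c ^ r + d ^ r := by
    have : S - d ^ p = c ^ p := by rw [h1]; ring
    rw [this, hrw c hc, hrw d hd]
  have heq : b ^ p = d ^ p := by
    apply hmono.injOn hbmem hdmem
    show (S - b ^ p) ^ s + (b ^ p) ^ s = (S - d ^ p) ^ s + (d ^ p) ^ s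
    rw [hgb, hgd, h2]
  have hbd : b = d := by
    have := congrArg (fun x : ℝ => x ^ (1 / p)) heq
    simpa [← Real.rpow_mul hb.le, ← Real.rpow_mul hd.le,
      mul_inv_cancel₀ hp.ne', Real.rpow_one] using this
  have hacp : a ^ p = c ^ p := by
    have : a ^ p + b ^ p = c ^ p + d ^ p := h1
    rw [heq] at this; linarith
  have hac : a = c := by
    have := congrArg (fun x : ℝ => x ^ (1 / p)) hacp
    simpa [← Real.rpow_mul ha.le, ← Real.rpow_mul hc.le,
      mul_inv_cancel₀ hp.ne', Real.rpow_one] using this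
  exact ⟨hac, hbd⟩

/-- for positive reals `a < b`, `c < d` with `(a,b) ≠ (c,d)`, the equation
`a^q + b^q = c^q + d^q` has at most one positive solution `q`. -/
theorem stmt_10 (a b c d : ℝ) (ha : 0 < a) (hb : 0 < b) (hc : 0 < c) (hd : 0 < d)
    (hab : a < b) (hcd : c < d) (hne : (a, b) ≠ (c, d)) :
    {q : ℝ | 0 < q ∧ a ^ q + b ^ q = c ^ q + d ^ q}.Subsingleton := by
  intro x hx y hy
  obtain ⟨hx0, hxe⟩ := hx
  obtain ⟨hy0, hye⟩ := hy
  rcases lt_trichotomy x y with h | h | h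
  · obtain ⟨hac, hbd⟩ := stmt10_key a b c d x y ha hb hc hd hab hcd hx0 h hxe hye
    exact absurd (Prod.ext hac hbd) hne
  · exact h
  · obtain ⟨hac, hbd⟩ := stmt10_key a b c d y x ha hb hc hd hab hcd hy0 h hye hxe
    exact absurd (Prod.ext hac hbd) hne
end

section
/- Let n ≥ 1, let p ∈ ℕ^n have pairwise distinct positive integer entries, and let (i,t) and (j,u) be pairs with i, j ∈ [n], t, u nonnegative integers, and (i,t) ≠ (j,u). Then: (1) the set of q > 0 satisfying (1/p_i)·(t^q/2 + (t+1)^q/2)^{1/q} = (1/p_j)·(u^q/2 + (u+1)^q/2)^{1/q} has at most one element; and (2) if additionally t ≥ 1 and u ≥ 1, the set of q < 0 satisfying the same equation has at most one element. -/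
open Real Set


noncomputable def Fsig (y : ℝ) : ℝ := y * Real.exp y / (1 + Real.exp y) - Real.log (1 + Real.exp y)

lemma one_add_exp_pos (y : ℝ) : 0 < 1 + Real.exp y := by positivity

lemma hasDerivAt_Fsig (y : ℝ) :
    HasDerivAt Fsig (y * Real.exp y / (1 + Real.exp y) ^ 2) y := by
  have h1 : HasDerivAt (fun y : ℝ => y * Real.exp y) (1 * Real.exp y + y * Real.exp y) y :=
    (hasDerivAt_id y).mul (Real.hasDerivAt_exp y)
  have h2 : HasDerivAt (fun y : ℝ => 1 + Real.exp y) (Real.exp y) y :=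
    (Real.hasDerivAt_exp y).const_add 1
  have h3 := h1.div h2 (ne_of_gt (one_add_exp_pos y))
  have h4 := h2.log (ne_of_gt (one_add_exp_pos y))
  have h5 := h3.sub h4
  refine h5.congr_deriv ?_
  have hv : (0:ℝ) < 1 + Real.exp y := one_add_exp_pos y
  field_simp
  ring

lemma Fsig_neg (y : ℝ) : Fsig (-y) = Fsig y := by
  unfold Fsig
  have hp : (0:ℝ) < Real.exp y := Real.exp_pos y
  have h2 : 1 + Real.exp (-y) = (1 + Real.exp y) * (Real.exp y)⁻¹ := by
    rw [Real.exp_neg]; field_simp; ring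
  rw [h2, Real.log_mul (by positivity) (by positivity), Real.log_inv, Real.log_exp,
    Real.exp_neg]
  have hv : (0:ℝ) < 1 + Real.exp y := one_add_exp_pos y
  field_simp
  ring

lemma Fsig_strictMono : StrictMonoOn Fsig (Set.Ici 0) := by
  apply strictMonoOn_of_deriv_pos (convex_Ici 0)
  · exact fun y _ => (hasDerivAt_Fsig y).continuousAt.continuousWithinAt
  · intro y hy
    rw [interior_Ici] at hy
    rw [(hasDerivAt_Fsig y).deriv]
    have : (0:ℝ) < y := hy
    positivity

lemma Fsig_abs (y : ℝ) : Fsig |y| = Fsig y := by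
  rcases abs_choice y with h | h
  · rw [h]
  · rw [h, Fsig_neg]

lemma Fsig_lt {a b q : ℝ} (hb : 0 < b) (hab : b < a) (hq : q ≠ 0) :
    Fsig (q * b) < Fsig (q * a) := by
  have hq' : 0 < |q| := abs_pos.mpr hq
  have h1 : |q * b| < |q * a| := by
    rw [abs_mul, abs_mul, abs_of_pos hb, abs_of_pos (lt_trans hb hab)]
    exact mul_lt_mul_of_pos_left hab hq'
  have := Fsig_strictMono (abs_nonneg (q*b)) (le_trans (abs_nonneg (q*b)) h1.le) h1
  rwa [Fsig_abs, Fsig_abs] at this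

noncomputable def Phi (a b q : ℝ) : ℝ :=
  (Real.log (1 + Real.exp (q * a)) - Real.log (1 + Real.exp (q * b))) / q

lemma hasDerivAt_lge (a q : ℝ) :
    HasDerivAt (fun q => Real.log (1 + Real.exp (q * a)))
      (a * Real.exp (q * a) / (1 + Real.exp (q * a))) q := by
  have h1 : HasDerivAt (fun q : ℝ => q * a) a q := by
    simpa using (hasDerivAt_id q).mul_const a
  have h2 : HasDerivAt (fun q : ℝ => Real.exp (q * a)) (Real.exp (q * a) * a) q := h1.exp
  have h3 := (h2.const_add 1).log (ne_of_gt (one_add_exp_pos (q * a)))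
  convert h3 using 1
  ring

lemma hasDerivAt_Phi (a b : ℝ) {q : ℝ} (hq : q ≠ 0) :
    HasDerivAt (Phi a b) ((Fsig (q * a) - Fsig (q * b)) / q ^ 2) q := by
  have hN := (hasDerivAt_lge a q).sub (hasDerivAt_lge b q)
  have hd := hN.div (hasDerivAt_id q) hq
  have : HasDerivAt (Phi a b) (((a * Real.exp (q*a) / (1 + Real.exp (q*a)) -
      b * Real.exp (q*b) / (1 + Real.exp (q*b))) * q -
      (Real.log (1 + Real.exp (q*a)) - Real.log (1 + Real.exp (q*b))) * 1) / q ^ 2) q := hd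
  convert this using 1
  unfold Fsig
  have h1 : (0:ℝ) < 1 + Real.exp (q*a) := one_add_exp_pos _
  have h2 : (0:ℝ) < 1 + Real.exp (q*b) := one_add_exp_pos _
  field_simp
  ring

lemma Phi_injOn_pos {a b : ℝ} (hb : 0 < b) (hab : b < a) :
    StrictMonoOn (Phi a b) (Set.Ioi 0) := by
  apply strictMonoOn_of_deriv_pos (convex_Ioi 0)
  · exact fun q hq => (hasDerivAt_Phi a b (ne_of_gt hq)).continuousAt.continuousWithinAt
  · intro q hq
    rw [interior_Ioi] at hq
    rw [(hasDerivAt_Phi a b (ne_of_gt hq)).deriv]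
    exact div_pos (sub_pos.mpr (Fsig_lt hb hab (ne_of_gt hq))) (pow_pos hq 2)

lemma Phi_injOn_neg {a b : ℝ} (hb : 0 < b) (hab : b < a) :
    StrictMonoOn (Phi a b) (Set.Iio 0) := by
  apply strictMonoOn_of_deriv_pos (convex_Iio 0)
  · exact fun q hq => (hasDerivAt_Phi a b (ne_of_lt hq)).continuousAt.continuousWithinAt
  · intro q hq
    rw [interior_Iio] at hq
    rw [(hasDerivAt_Phi a b (ne_of_lt hq)).deriv]
    exact div_pos (sub_pos.mpr (Fsig_lt hb hab (ne_of_lt hq))) (pow_two_pos_of_ne_zero (ne_of_lt hq))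


lemma logM (T q : ℝ) (hT : 0 < T) :
    Real.log (T ^ q / 2 + (T + 1) ^ q / 2) =
      q * Real.log T + Real.log (1 + Real.exp (q * (Real.log (T + 1) - Real.log T)))
        - Real.log 2 := by
  have hT1 : (0:ℝ) < T + 1 := by linarith
  have key : T ^ q / 2 + (T + 1) ^ q / 2 =
      Real.exp (q * Real.log T) *
        (1 + Real.exp (q * (Real.log (T + 1) - Real.log T))) / 2 := by
    have h2 : Real.exp (q * Real.log T) * Real.exp (q * (Real.log (T+1) - Real.log T)) =
        Real.exp (Real.log (T+1) * q) := by
      rw [← Real.exp_add]; ring_nf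
    rw [Real.rpow_def_of_pos hT, Real.rpow_def_of_pos hT1]
    rw [mul_add, mul_one, h2]
    ring_nf
  rw [key, Real.log_div (by positivity) two_ne_zero,
    Real.log_mul (Real.exp_ne_zero _) (by positivity), Real.log_exp]

lemma eq_iff (Pi Pj T U : ℝ) {q : ℝ} (hPi : 0 < Pi) (hPj : 0 < Pj)
    (hT : 1 ≤ T) (hU : 1 ≤ U) (hq : q ≠ 0) :
    ((1 / Pi) * ((T ^ q / 2 + (T + 1) ^ q / 2) ^ (1 / q)) =
      (1 / Pj) * ((U ^ q / 2 + (U + 1) ^ q / 2) ^ (1 / q))) ↔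
    (Real.log Pj - Real.log Pi + Real.log T - Real.log U +
      Phi (Real.log (T + 1) - Real.log T) (Real.log (U + 1) - Real.log U) q = 0) := by
  have hT0 : (0:ℝ) < T := lt_of_lt_of_le one_pos hT
  have hU0 : (0:ℝ) < U := lt_of_lt_of_le one_pos hU
  have hMt : (0:ℝ) < T ^ q / 2 + (T + 1) ^ q / 2 := by
    have := Real.rpow_pos_of_pos hT0 q
    have := Real.rpow_pos_of_pos (by linarith : (0:ℝ) < T + 1) q
    positivity
  have hMu : (0:ℝ) < U ^ q / 2 + (U + 1) ^ q / 2 := by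
    have := Real.rpow_pos_of_pos hU0 q
    have := Real.rpow_pos_of_pos (by linarith : (0:ℝ) < U + 1) q
    positivity
  have hL : (0:ℝ) < (1 / Pi) * ((T ^ q / 2 + (T + 1) ^ q / 2) ^ (1 / q)) := by
    have := Real.rpow_pos_of_pos hMt (1/q); positivity
  have hR : (0:ℝ) < (1 / Pj) * ((U ^ q / 2 + (U + 1) ^ q / 2) ^ (1 / q)) := by
    have := Real.rpow_pos_of_pos hMu (1/q); positivity
  have step1 : ((1 / Pi) * ((T ^ q / 2 + (T + 1) ^ q / 2) ^ (1 / q)) =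
      (1 / Pj) * ((U ^ q / 2 + (U + 1) ^ q / 2) ^ (1 / q))) ↔
      Real.log ((1 / Pi) * ((T ^ q / 2 + (T + 1) ^ q / 2) ^ (1 / q))) =
      Real.log ((1 / Pj) * ((U ^ q / 2 + (U + 1) ^ q / 2) ^ (1 / q))) :=
    ⟨fun h => by rw [h], fun h => Real.log_injOn_pos (mem_Ioi.mpr hL) (mem_Ioi.mpr hR) h⟩
  rw [step1, Real.log_mul (by positivity) (ne_of_gt (Real.rpow_pos_of_pos hMt _)),
    Real.log_mul (by positivity) (ne_of_gt (Real.rpow_pos_of_pos hMu _)),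
    Real.log_rpow hMt, Real.log_rpow hMu, logM T q hT0, logM U q hU0,
    one_div Pi, one_div Pj, Real.log_inv, Real.log_inv]
  unfold Phi
  rw [← sub_eq_zero]
  constructor
  · intro h
    field_simp at h ⊢
    linarith
  · intro h
    field_simp at h ⊢
    linarith

section helpers

lemma lgap_pos {U : ℝ} (hU : 0 < U) : 0 < Real.log (U + 1) - Real.log U :=
  sub_pos.mpr (Real.log_lt_log hU (by linarith))

lemma lgap_lt {T U : ℝ} (hT : 0 < T) (hTU : T < U) :
    Real.log (U + 1) - Real.log U < Real.log (T + 1) - Real.log T := by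
  have hU : 0 < U := hT.trans hTU
  rw [← Real.log_div (by positivity) (ne_of_gt hU), ← Real.log_div (by positivity) (ne_of_gt hT)]
  apply Real.log_lt_log (by positivity)
  rw [div_lt_div_iff₀ hU hT]
  nlinarith

lemma Mpos {T : ℝ} (q : ℝ) (hT : 0 ≤ T) : 0 < T ^ q / 2 + (T + 1) ^ q / 2 := by
  have h1 : 0 ≤ T ^ q := Real.rpow_nonneg hT q
  have h2 : 0 < (T + 1) ^ q := Real.rpow_pos_of_pos (by linarith) q
  linarith

lemma same_t {Pi Pj X : ℝ} (hPi : 0 < Pi) (hPj : 0 < Pj) (hX : 0 < X)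
    (h : (1 / Pi) * X = (1 / Pj) * X) : Pi = Pj := by
  have h2 := mul_right_cancel₀ (ne_of_gt hX) h
  field_simp at h2
  linarith

lemma key0 (Pi Pj U : ℝ) (hPi : 0 < Pi) (hPj : 0 < Pj) (hU : 1 ≤ U) {q : ℝ} (hq : 0 < q) :
    ((1 / Pi) * (((0:ℝ) ^ q / 2 + ((0:ℝ) + 1) ^ q / 2) ^ (1 / q)) =
      (1 / Pj) * ((U ^ q / 2 + (U + 1) ^ q / 2) ^ (1 / q))) ↔
    (Pi * U / Pj) ^ q + (Pi * (U + 1) / Pj) ^ q = 1 := by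
  have hU0 : (0:ℝ) < U := lt_of_lt_of_le one_pos hU
  have hU1 : (0:ℝ) < U + 1 := by linarith
  have hqne : q ≠ 0 := ne_of_gt hq
  have h0 : ((0:ℝ) ^ q / 2 + ((0:ℝ) + 1) ^ q / 2) = 1 / 2 := by
    rw [Real.zero_rpow hqne, zero_add, Real.one_rpow]
    norm_num
  have hMu : (0:ℝ) < U ^ q / 2 + (U + 1) ^ q / 2 := Mpos q hU0.le
  rw [h0]
  have step1 : ((1 / Pi) * ((1/2:ℝ) ^ (1 / q)) =
      (1 / Pj) * ((U ^ q / 2 + (U + 1) ^ q / 2) ^ (1 / q))) ↔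
      ((1/2:ℝ) ^ (1 / q)) * Pj = ((U ^ q / 2 + (U + 1) ^ q / 2) ^ (1 / q)) * Pi := by
    rw [div_mul_eq_mul_div, div_mul_eq_mul_div, div_eq_div_iff hPi.ne' hPj.ne', one_mul, one_mul]
  rw [step1]
  have hhalf : (0:ℝ) ≤ (1/2:ℝ) ^ (1 / q) := (Real.rpow_pos_of_pos (by norm_num) _).le
  have hMuq : (0:ℝ) ≤ (U ^ q / 2 + (U + 1) ^ q / 2) ^ (1 / q) := (Real.rpow_pos_of_pos hMu _).le
  rw [← Real.rpow_left_inj (by positivity) (by positivity) hqne]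
  rw [Real.mul_rpow hhalf hPj.le, Real.mul_rpow hMuq hPi.le]
  rw [one_div q, Real.rpow_inv_rpow (by norm_num) hqne, Real.rpow_inv_rpow hMu.le hqne]
  have e1 : (Pi * U / Pj) ^ q = Pi ^ q * U ^ q / Pj ^ q := by
    rw [Real.div_rpow (by positivity) hPj.le, Real.mul_rpow hPi.le hU0.le]
  have e2 : (Pi * (U + 1) / Pj) ^ q = Pi ^ q * (U + 1) ^ q / Pj ^ q := by
    rw [Real.div_rpow (by positivity) hPj.le, Real.mul_rpow hPi.le hU1.le]
  have hPjq : (0:ℝ) < Pj ^ q := Real.rpow_pos_of_pos hPj q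
  rw [e1, e2]
  constructor
  · intro h
    field_simp
    nlinarith [h]
  · intro h
    field_simp at h
    nlinarith [h]
end helpers

lemma lemA (Pi Pj : ℝ) (hPi : 0 < Pi) (hPj : 0 < Pj) (t u : ℕ) (htu : t ≤ u)
    (hd : Pi ≠ Pj ∨ t ≠ u) :
    {q : ℝ | 0 < q ∧ (1 / Pi) * (((t:ℝ) ^ q / 2 + ((t:ℝ) + 1) ^ q / 2) ^ (1 / q)) =
      (1 / Pj) * (((u:ℝ) ^ q / 2 + ((u:ℝ) + 1) ^ q / 2) ^ (1 / q))}.Subsingleton := by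
  rcases eq_or_lt_of_le htu with rfl | hlt
  · have hPij : Pi ≠ Pj := hd.resolve_right (fun h => h rfl)
    intro q1 hq1 q2 hq2
    exfalso
    exact hPij (same_t hPi hPj (Real.rpow_pos_of_pos (Mpos q1 (Nat.cast_nonneg t)) _) hq1.2)
  · rcases Nat.eq_zero_or_pos t with rfl | ht1
    · intro q1 hq1 q2 hq2
      obtain ⟨hq1p, he1⟩ := hq1
      obtain ⟨hq2p, he2⟩ := hq2
      rw [Nat.cast_zero] at he1 he2
      have hu1 : (1:ℝ) ≤ (u:ℝ) := Nat.one_le_cast.mpr hlt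
      have k1 := (key0 Pi Pj u hPi hPj hu1 hq1p).mp he1
      have k2 := (key0 Pi Pj u hPi hPj hu1 hq2p).mp he2
      set α := Pi * (u:ℝ) / Pj with hαdef
      set β := Pi * ((u:ℝ) + 1) / Pj with hβdef
      have hu0 : (0:ℝ) < (u:ℝ) := lt_of_lt_of_le one_pos hu1
      have hαpos : 0 < α := by rw [hαdef]; positivity
      have hβpos : 0 < β := by rw [hβdef]; positivity
      have hαβ : α < β := by
        rw [hαdef, hβdef, div_lt_div_iff₀ hPj hPj]
        nlinarith
      by_cases hβ1 : 1 ≤ β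
      · exfalso
        have h1 : (1:ℝ) ≤ β ^ q1 := by
          have := Real.rpow_le_rpow (by norm_num) hβ1 hq1p.le
          rwa [Real.one_rpow] at this
        have h2 : 0 < α ^ q1 := Real.rpow_pos_of_pos hαpos q1
        linarith
      · push_neg at hβ1
        have hα1 : α < 1 := lt_trans hαβ hβ1
        rcases lt_trichotomy q1 q2 with h | h | h
        · exfalso
          have a1 := Real.rpow_lt_rpow_of_exponent_gt hαpos hα1 h
          have b1 := Real.rpow_lt_rpow_of_exponent_gt hβpos hβ1 h
          linarith
        · exact h
        · exfalso
          have a1 := Real.rpow_lt_rpow_of_exponent_gt hαpos hα1 h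
          have b1 := Real.rpow_lt_rpow_of_exponent_gt hβpos hβ1 h
          linarith
    · intro q1 hq1 q2 hq2
      obtain ⟨hq1p, he1⟩ := hq1
      obtain ⟨hq2p, he2⟩ := hq2
      have hT : (1:ℝ) ≤ (t:ℝ) := Nat.one_le_cast.mpr ht1
      have hU : (1:ℝ) ≤ (u:ℝ) := Nat.one_le_cast.mpr (le_trans ht1 hlt.le)
      have hTU : (t:ℝ) < (u:ℝ) := Nat.cast_lt.mpr hlt
      have hT0 : (0:ℝ) < (t:ℝ) := lt_of_lt_of_le one_pos hT
      have k1 := (eq_iff Pi Pj t u hPi hPj hT hU (ne_of_gt hq1p)).mp he1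
      have k2 := (eq_iff Pi Pj t u hPi hPj hT hU (ne_of_gt hq2p)).mp he2
      have hb := lgap_pos (lt_of_lt_of_le one_pos hU)
      have hab := lgap_lt hT0 hTU
      exact (Phi_injOn_pos hb hab).injOn (mem_Ioi.mpr hq1p) (mem_Ioi.mpr hq2p) (by linarith)

lemma lemB (Pi Pj : ℝ) (hPi : 0 < Pi) (hPj : 0 < Pj) (t u : ℕ) (ht : 1 ≤ t) (htu : t ≤ u)
    (hd : Pi ≠ Pj ∨ t ≠ u) :
    {q : ℝ | q < 0 ∧ (1 / Pi) * (((t:ℝ) ^ q / 2 + ((t:ℝ) + 1) ^ q / 2) ^ (1 / q)) =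
      (1 / Pj) * (((u:ℝ) ^ q / 2 + ((u:ℝ) + 1) ^ q / 2) ^ (1 / q))}.Subsingleton := by
  rcases eq_or_lt_of_le htu with rfl | hlt
  · have hPij : Pi ≠ Pj := hd.resolve_right (fun h => h rfl)
    intro q1 hq1 q2 hq2
    exfalso
    exact hPij (same_t hPi hPj (Real.rpow_pos_of_pos (Mpos q1 (Nat.cast_nonneg t)) _) hq1.2)
  · intro q1 hq1 q2 hq2
    obtain ⟨hq1p, he1⟩ := hq1
    obtain ⟨hq2p, he2⟩ := hq2
    have hT : (1:ℝ) ≤ (t:ℝ) := Nat.one_le_cast.mpr ht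
    have hU : (1:ℝ) ≤ (u:ℝ) := Nat.one_le_cast.mpr (le_trans ht hlt.le)
    have hTU : (t:ℝ) < (u:ℝ) := Nat.cast_lt.mpr hlt
    have hT0 : (0:ℝ) < (t:ℝ) := lt_of_lt_of_le one_pos hT
    have k1 := (eq_iff Pi Pj t u hPi hPj hT hU (ne_of_lt hq1p)).mp he1
    have k2 := (eq_iff Pi Pj t u hPi hPj hT hU (ne_of_lt hq2p)).mp he2
    have hb := lgap_pos (lt_of_lt_of_le one_pos hU)
    have hab := lgap_lt hT0 hTU
    exact (Phi_injOn_neg hb hab).injOn (mem_Iio.mpr hq1p) (mem_Iio.mpr hq2p) (by linarith)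



/-- any two distinct power-mean signpost curves
`q ↦ (1/p_i)·(t^q/2 + (t+1)^q/2)^{1/q}` intersect at most once on `q > 0`, and (for `t,u ≥ 1`)
at most once on `q < 0`. -/
theorem stmt_11 {n : ℕ} (hn : 1 ≤ n) (p : Fin n → ℕ) (hp : ∀ i, 0 < p i)
    (hpdist : ∀ i j : Fin n, i ≠ j → p i ≠ p j)
    (i j : Fin n) (t u : ℕ) (hne : (i, t) ≠ (j, u)) :
    {q : ℝ | 0 < q ∧
        (1 / (p i : ℝ)) * (((t : ℝ) ^ q / 2 + ((t : ℝ) + 1) ^ q / 2) ^ (1 / q)) =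
          (1 / (p j : ℝ)) * (((u : ℝ) ^ q / 2 + ((u : ℝ) + 1) ^ q / 2) ^ (1 / q))}.Subsingleton ∧
    (1 ≤ t → 1 ≤ u →
      {q : ℝ | q < 0 ∧
        (1 / (p i : ℝ)) * (((t : ℝ) ^ q / 2 + ((t : ℝ) + 1) ^ q / 2) ^ (1 / q)) =
          (1 / (p j : ℝ)) * (((u : ℝ) ^ q / 2 + ((u : ℝ) + 1) ^ q / 2) ^ (1 / q))}.Subsingleton) := by
  have hPi : (0:ℝ) < (p i : ℝ) := by exact_mod_cast hp i
  have hPj : (0:ℝ) < (p j : ℝ) := by exact_mod_cast hp j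
  have hd : (p i : ℝ) ≠ (p j : ℝ) ∨ t ≠ u := by
    by_cases hij : i = j
    · right; intro htu; exact hne (by rw [hij, htu])
    · left; exact_mod_cast hpdist i j hij
  constructor
  · rcases le_total t u with h | h
    · exact lemA _ _ hPi hPj t u h hd
    · have hsym := lemA _ _ hPj hPi u t h (hd.imp Ne.symm Ne.symm)
      intro q1 hq1 q2 hq2
      exact hsym ⟨hq1.1, hq1.2.symm⟩ ⟨hq2.1, hq2.2.symm⟩
  · intro ht hu
    rcases le_total t u with h | h
    · exact lemB _ _ hPi hPj t u ht h hd
    · have hsym := lemB _ _ hPj hPi u t hu h (hd.imp Ne.symm Ne.symm)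
      intro q1 hq1 q2 hq2
      exact hsym ⟨hq1.1, hq1.2.symm⟩ ⟨hq2.1, hq2.2.symm⟩
end

section
/- For every integer house size H ≥ 1 and every ε > 0, there exist an integer n ≥ 1, a population vector p ∈ ℕ^n, and a state i ∈ [n] such that every x ∈ f(p,H;0) satisfies |x_i − q_i| ≥ H − 1 − ε. -/
open scoped Classical
open Set

noncomputable section

lemma roundSet_pos {r : ℝ} (hr : 0 < r) {x : ℕ} (hx : x ∈ roundSet 0 r) : 1 ≤ x := by
  rcases hx with ⟨h, _⟩ | ⟨t, hxt, h1, h2⟩ | ⟨t, hxt, h2⟩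
  · linarith
  · subst hxt
    have ht : (0:ℝ) < (x:ℝ) := by linarith
    exact_mod_cast ht
  · have ht : (0:ℝ) < (t:ℝ) := by linarith
    have ht' : 1 ≤ t := by exact_mod_cast ht
    rcases hxt with h | h <;> omega

/-- for every house size `H` and every `ε > 0` there is an instance on which the
Adams method (`δ = 0`) deviates from some quota by at least `H − 1 − ε`. -/
theorem stmt_12 (H : ℕ) (hH : 1 ≤ H) (ε : ℝ) (hε : 0 < ε) :
    ∃ (n : ℕ), 1 ≤ n ∧ ∃ (p : Fin n → ℕ), (∀ i, 0 < p i) ∧ ∃ i : Fin n,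
      ∀ x ∈ divisorOutput p H 0, (H : ℝ) - 1 - ε ≤ |(x i : ℝ) - quota p H i| := by
  set N : ℕ := ⌈(H:ℝ)^2 / ε⌉₊ + 1 with hNdef
  have hN1 : 1 ≤ N := Nat.le_add_left 1 _
  have hNε : (H:ℝ)^2 ≤ ε * N := by
    have h1 : (H:ℝ)^2 / ε ≤ N := by
      calc (H:ℝ)^2 / ε ≤ ⌈(H:ℝ)^2 / ε⌉₊ := Nat.le_ceil _
        _ ≤ (⌈(H:ℝ)^2 / ε⌉₊ + 1 : ℕ) := by exact_mod_cast Nat.le_add_right _ 1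
        _ = (N:ℝ) := by rw [hNdef]
    calc (H:ℝ)^2 = ε * ((H:ℝ)^2 / ε) := by field_simp
      _ ≤ ε * N := by nlinarith
  set i0 : Fin H := ⟨0, hH⟩ with hi0
  set p : Fin H → ℕ := fun i => if i = i0 then N else 1 with hp
  refine ⟨H, hH, p, ?_, i0, ?_⟩
  · intro i; simp only [hp]; split_ifs <;> omega
  intro x hx
  obtain ⟨hsum, lam, hlam, hmem⟩ := hx
  have hxi : ∀ i, 1 ≤ x i := by
    intro i
    refine roundSet_pos ?_ (hmem i)
    have : 0 < p i := by simp only [hp]; split_ifs <;> omega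
    have : (0:ℝ) < (p i : ℝ) := by exact_mod_cast this
    positivity
  -- x i0 = 1
  have hcard : (Finset.univ.erase i0).card = H - 1 := by
    rw [Finset.card_erase_of_mem (Finset.mem_univ _), Finset.card_univ, Fintype.card_fin]
  have hsplit : x i0 + ∑ j ∈ Finset.univ.erase i0, x j = H := by
    rw [Finset.add_sum_erase _ _ (Finset.mem_univ i0)]; exact hsum
  have hrest : H - 1 ≤ ∑ j ∈ Finset.univ.erase i0, x j := by
    calc H - 1 = (Finset.univ.erase i0).card * 1 := by omega
      _ ≤ ∑ j ∈ Finset.univ.erase i0, x j :=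
        Finset.card_nsmul_le_sum _ _ _ (fun j _ => hxi j)
  have hx0 : x i0 = 1 := by have := hxi i0; omega
  -- compute the population sum
  have hpsum : (∑ j, (p j : ℝ)) = (N:ℝ) + ((H:ℝ) - 1) := by
    rw [← Finset.add_sum_erase _ _ (Finset.mem_univ i0)]
    have h1 : (p i0 : ℝ) = (N:ℝ) := by simp [hp]
    have hpt : ∀ j ∈ Finset.univ.erase i0, ((p j : ℝ)) = 1 := by
      intro j hj
      have hj' := Finset.ne_of_mem_erase hj
      simp [hp, hj']
    have h2 : ∑ j ∈ Finset.univ.erase i0, ((p j : ℝ)) = (H:ℝ) - 1 := by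
      rw [Finset.sum_congr rfl hpt, Finset.sum_const, hcard]
      have : ((H - 1 : ℕ) : ℝ) = (H:ℝ) - 1 := by
        push_cast [Nat.cast_sub hH]; ring
      simp [this]
    rw [h1, h2]
  have hq : quota p H i0 = (N:ℝ) * H / ((N:ℝ) + ((H:ℝ) - 1)) := by
    rw [quota, hpsum]; simp [hp]
  have hH1 : (1:ℝ) ≤ (H:ℝ) := by exact_mod_cast hH
  have hN1' : (1:ℝ) ≤ (N:ℝ) := by exact_mod_cast hN1
  have hden : (0:ℝ) < (N:ℝ) + ((H:ℝ) - 1) := by linarith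
  have hqge : (H:ℝ) - ε ≤ quota p H i0 := by
    rw [hq, le_div_iff₀ hden]
    nlinarith
  have habs : quota p H i0 - 1 ≤ |(x i0 : ℝ) - quota p H i0| := by
    rw [hx0]
    have h := neg_le_abs ((1:ℝ) - quota p H i0)
    push_cast
    linarith
  linarith
end
end

section
/- For every integer house size H ≥ 1, every δ ∈ (0,1], and every ε > 0, there exist an integer n ≥ 1, a population vector p ∈ ℕ^n, and a state i ∈ [n] such that every x ∈ f(p,H;δ) satisfies |x_i − q_i| ≥ H − ε. -/
open scoped Classical
open Set

noncomputable section

lemma roundSet_lb {δ r : ℝ} {x : ℕ} (hδ1 : δ ≤ 1) (hx : x ∈ roundSet δ r) :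
    r - 1 ≤ (x : ℝ) := by
  rcases hx with ⟨h1, h2⟩ | ⟨t, rfl, h1, h2⟩ | ⟨t, h1, h2⟩
  · subst h2; push_cast; linarith
  · linarith
  · rcases h1 with rfl | rfl <;> push_cast <;> linarith

lemma roundSet_zero {δ r : ℝ} {x : ℕ} (hδ0 : 0 < δ) (hr : r < δ) (h0 : 0 ≤ r)
    (hx : x ∈ roundSet δ r) : x = 0 := by
  rcases hx with ⟨h1, h2⟩ | ⟨t, rfl, h1, h2⟩ | ⟨t, h1, h2⟩
  · exact h2
  · have hx1 : (x : ℝ) < 1 := by linarith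
    exact_mod_cast Nat.lt_one_iff.mp (by exact_mod_cast hx1)
  · have : (0:ℝ) ≤ t := Nat.cast_nonneg t
    linarith

/-- for every house size `H`, every `δ ∈ (0,1]` and every `ε > 0` there is an
instance on which the `δ`-divisor method deviates from some quota by at least `H − ε`. -/
theorem stmt_13 (H : ℕ) (hH : 1 ≤ H) (δ : ℝ) (hδ : δ ∈ Set.Ioc (0 : ℝ) 1)
    (ε : ℝ) (hε : 0 < ε) :
    ∃ (n : ℕ), 1 ≤ n ∧ ∃ (p : Fin n → ℕ), (∀ i, 0 < p i) ∧ ∃ i : Fin n,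
      ∀ x ∈ divisorOutput p H δ, (H : ℝ) - ε ≤ |(x i : ℝ) - quota p H i| := by
  obtain ⟨hδ0, hδ1⟩ := hδ
  set A : ℕ := ⌈((H : ℝ) + 1) / δ⌉₊ with hAdef
  set N : ℕ := ⌈((A : ℝ) * H) / ε⌉₊ + 1 with hNdef
  have hApos : 0 < A := Nat.ceil_pos.2 (by positivity)
  have hAδ : (H : ℝ) + 1 ≤ δ * A := by
    have h := Nat.le_ceil (((H : ℝ) + 1) / δ)
    rw [← hAdef] at h
    calc (H : ℝ) + 1 = δ * (((H : ℝ) + 1) / δ) := by field_simp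
    _ ≤ δ * A := by
        apply mul_le_mul_of_nonneg_left h (le_of_lt hδ0)
  have hNε : (A : ℝ) * H ≤ ε * N := by
    have h := Nat.le_ceil (((A : ℝ) * H) / ε)
    have hN' : (⌈((A : ℝ) * H) / ε⌉₊ : ℝ) ≤ (N : ℝ) := by
      rw [hNdef]; push_cast; linarith
    calc (A : ℝ) * H = ε * (((A : ℝ) * H) / ε) := by field_simp
    _ ≤ ε * N := by apply mul_le_mul_of_nonneg_left (le_trans h hN') (le_of_lt hε)
  set p : Fin (N + 1) → ℕ := Fin.cons A (fun _ => 1) with hpdef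
  have hp0 : p 0 = A := by simp [hpdef]
  have hps : ∀ i : Fin N, p i.succ = 1 := by intro i; simp [hpdef]
  refine ⟨N + 1, by omega, p, ?_, 0, ?_⟩
  · intro i
    refine Fin.cases ?_ ?_ i
    · simpa [hp0] using hApos
    · intro j; simp [hps]
  · intro x hx
    obtain ⟨hsum, lam, hlam, hmem⟩ := hx
    have hx0 : x 0 = H := by
      rcases le_or_gt δ lam with hge | hlt
      · -- x 0 ≥ H
        have h1 : lam * (A : ℝ) - 1 ≤ ((x 0 : ℕ) : ℝ) := by
          have := roundSet_lb hδ1 (hmem 0)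
          rwa [hp0] at this
        have h2 : (H : ℝ) ≤ (x 0 : ℝ) := by
          have hA' : δ * A ≤ lam * A := by
            apply mul_le_mul_of_nonneg_right hge (Nat.cast_nonneg A)
          linarith
        have h2' : H ≤ x 0 := by exact_mod_cast h2
        have h3 : x 0 ≤ H := by
          rw [← hsum]
          exact Finset.single_le_sum (fun i _ => Nat.zero_le (x i)) (Finset.mem_univ 0)
        omega
      · -- all small states get 0
        have hsmall : ∀ i : Fin N, x i.succ = 0 := by
          intro i
          have hm := hmem i.succ
          rw [hps i] at hm
          exact roundSet_zero hδ0 (by simpa using hlt) (by simpa using le_of_lt hlam) hm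
        have : (∑ i, x i) = x 0 := by
          rw [Fin.sum_univ_succ]
          simp [hsmall]
        omega
    have hq : quota p H 0 ≤ ε := by
      have hsump : (∑ j, ((p j : ℕ) : ℝ)) = (A : ℝ) + N := by
        rw [Fin.sum_univ_succ, hp0]
        simp [hps]
      have hden : (0 : ℝ) < (A : ℝ) + N := by positivity
      rw [quota, hsump, hp0, div_le_iff₀ hden]
      have : ε * N ≤ ε * ((A : ℝ) + N) := by
        apply mul_le_mul_of_nonneg_left _ (le_of_lt hε)
        · linarith [Nat.cast_nonneg (α := ℝ) A]
      linarith
    have hqnn : 0 ≤ quota p H 0 := by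
      rw [quota]; positivity
    rw [hx0]
    calc (H : ℝ) - ε ≤ (H : ℝ) - quota p H 0 := by linarith
    _ ≤ |(H : ℝ) - quota p H 0| := le_abs_self _
end
end

section
/- Let (p,H) be an apportionment instance, let μ be a Borel probability measure on [0,1] with ∫ δ dμ(δ) = 1/2, and let x : [0,1] → ℕ₀^n be a measurable function with x(δ) ∈ f(p,H;δ) for every δ ∈ [0,1]. Then for every i ∈ [n], |∫ x_i(δ) dμ(δ) − q_i| ≤ (1/2)·(p_i / min_{j∈[n]} p_j + 1). -/
open scoped Classical
open Set

noncomputable section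

open MeasureTheory

lemma mem_roundSet_bounds {δ r : ℝ} (hδ0 : 0 ≤ δ) (hδ1 : δ ≤ 1) (hr : 0 < r)
    {x : ℕ} (hx : x ∈ roundSet δ r) :
    r - δ ≤ (x : ℝ) ∧ (x : ℝ) ≤ r - δ + 1 := by
  rcases hx with ⟨h1, h2⟩ | ⟨t, rfl, h1, h2⟩ | ⟨t, (rfl | rfl), h⟩
  · subst h2; constructor <;> · simp; linarith
  · constructor <;> linarith
  · constructor <;> linarith
  · push_cast; constructor <;> linarith

lemma pointwise_bounds {n : ℕ} (hn : 1 ≤ n) (p : Fin n → ℕ) (hp : ∀ i, 0 < p i)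
    (H : ℕ) {δ : ℝ} (hδ0 : 0 ≤ δ) (hδ1 : δ ≤ 1)
    {x : Fin n → ℕ} (hx : x ∈ divisorOutput p H δ) (i : Fin n) :
    quota p H i - ((1 - δ) * ((p i : ℝ) / (⨅ j : Fin n, (p j : ℝ))) + δ) ≤ (x i : ℝ) ∧
    (x i : ℝ) ≤ quota p H i + (δ * ((p i : ℝ) / (⨅ j : Fin n, (p j : ℝ))) + (1 - δ)) := by
  obtain ⟨hsum, lam, hlam, hmem⟩ := hx
  have hne : Nonempty (Fin n) := ⟨⟨0, hn⟩⟩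
  set m : ℝ := ⨅ j : Fin n, (p j : ℝ) with hm
  have hm1 : (1 : ℝ) ≤ m := le_ciInf fun j => by exact_mod_cast hp j
  have hm0 : 0 < m := lt_of_lt_of_le one_pos hm1
  have hmle : ∀ j, m ≤ (p j : ℝ) := fun j =>
    ciInf_le (Finite.bddBelow_range _) j
  set P : ℝ := ∑ j, (p j : ℝ) with hP
  have hP0 : 0 < P := by
    apply Finset.sum_pos (fun j _ => by exact_mod_cast hp j) Finset.univ_nonempty
  have hnmP : (n : ℝ) * m ≤ P := by
    calc (n : ℝ) * m = ∑ _j : Fin n, m := by simp [mul_comm]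
    _ ≤ P := Finset.sum_le_sum fun j _ => hmle j
  -- coordinate bounds
  have hcoord : ∀ j, lam * (p j : ℝ) - δ ≤ (x j : ℝ) ∧ (x j : ℝ) ≤ lam * (p j : ℝ) - δ + 1 :=
    fun j => mem_roundSet_bounds hδ0 hδ1 (mul_pos hlam (by exact_mod_cast hp j)) (hmem j)
  have hsumR : (∑ j, (x j : ℝ)) = (H : ℝ) := by exact_mod_cast congrArg Nat.cast hsum
  have hlow : lam * P - n * δ ≤ (H : ℝ) := by
    rw [← hsumR]
    calc lam * P - n * δ = ∑ j : Fin n, (lam * (p j : ℝ) - δ) := by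
          simp [Finset.sum_sub_distrib, Finset.mul_sum, hP]
    _ ≤ ∑ j, (x j : ℝ) := Finset.sum_le_sum fun j _ => (hcoord j).1
  have hhigh : (H : ℝ) ≤ lam * P + n * (1 - δ) := by
    rw [← hsumR]
    calc (∑ j, (x j : ℝ)) ≤ ∑ j : Fin n, (lam * (p j : ℝ) - δ + 1) :=
          Finset.sum_le_sum fun j _ => (hcoord j).2
    _ = lam * P + n * (1 - δ) := by
          simp [Finset.sum_add_distrib, Finset.sum_sub_distrib, Finset.mul_sum, hP]; ring
  have hlam_ub : lam ≤ ((H : ℝ) + n * δ) / P := by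
    rw [le_div_iff₀ hP0]; linarith
  have hlam_lb : ((H : ℝ) - n * (1 - δ)) / P ≤ lam := by
    rw [div_le_iff₀ hP0]; linarith
  have hpi0 : (0 : ℝ) < (p i : ℝ) := by exact_mod_cast hp i
  have hq : quota p H i = (p i : ℝ) * (H : ℝ) / P := rfl
  have hratio : (n : ℝ) * (p i : ℝ) / P ≤ (p i : ℝ) / m := by
    rw [div_le_div_iff₀ hP0 hm0]
    nlinarith [hmle i]
  constructor
  · have h1 : lam * (p i : ℝ) - δ ≤ (x i : ℝ) := (hcoord i).1
    have h2 : ((H : ℝ) - n * (1 - δ)) / P * (p i : ℝ) ≤ lam * (p i : ℝ) :=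
      mul_le_mul_of_nonneg_right hlam_lb hpi0.le
    have h3 : ((H : ℝ) - n * (1 - δ)) / P * (p i : ℝ)
        = quota p H i - (1 - δ) * ((n : ℝ) * (p i : ℝ) / P) := by
      rw [hq]; field_simp
    have h4 : (1 - δ) * ((n : ℝ) * (p i : ℝ) / P) ≤ (1 - δ) * ((p i : ℝ) / m) :=
      mul_le_mul_of_nonneg_left hratio (by linarith)
    linarith
  · have h1 : (x i : ℝ) ≤ lam * (p i : ℝ) - δ + 1 := (hcoord i).2
    have h2 : lam * (p i : ℝ) ≤ ((H : ℝ) + n * δ) / P * (p i : ℝ) :=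
      mul_le_mul_of_nonneg_right hlam_ub hpi0.le
    have h3 : ((H : ℝ) + n * δ) / P * (p i : ℝ)
        = quota p H i + δ * ((n : ℝ) * (p i : ℝ) / P) := by
      rw [hq]; field_simp
    have h4 : δ * ((n : ℝ) * (p i : ℝ) / P) ≤ δ * ((p i : ℝ) / m) :=
      mul_le_mul_of_nonneg_left hratio hδ0
    linarith

/-- a randomized stationary divisor method whose shift distribution has mean
`1/2` deviates in expectation from each quota by at most `(p_i / min_j p_j + 1)/2`. -/
theorem stmt_15 {n : ℕ} (hn : 1 ≤ n) (p : Fin n → ℕ) (hp : ∀ i, 0 < p i)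
    (H : ℕ) (hH : 1 ≤ H)
    (μ : Measure ℝ) [IsProbabilityMeasure μ] (hsupp : μ (Set.Icc (0 : ℝ) 1) = 1)
    (hmean : ∫ δ, δ ∂μ = 1 / 2)
    (x : ℝ → (Fin n → ℕ)) (hmeas : Measurable x)
    (hsel : ∀ δ ∈ Set.Icc (0 : ℝ) 1, x δ ∈ divisorOutput p H δ)
    (i : Fin n) :
    |(∫ δ, ((x δ i : ℕ) : ℝ) ∂μ) - quota p H i| ≤
      (1 / 2) * ((p i : ℝ) / (⨅ j : Fin n, (p j : ℝ)) + 1) := by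
  have hne : Nonempty (Fin n) := ⟨⟨0, hn⟩⟩
  set m : ℝ := ⨅ j : Fin n, (p j : ℝ) with hm
  have hm1 : (1 : ℝ) ≤ m := le_ciInf fun j => by exact_mod_cast hp j
  set ρ : ℝ := (p i : ℝ) / m with hρ
  have hρ1 : 1 ≤ ρ := by
    rw [hρ, le_div_iff₀ (by linarith)]
    have := ciInf_le (Finite.bddBelow_range fun j : Fin n => ((p j : ℕ) : ℝ)) i
    simpa using this.trans_eq (by norm_num)
  -- a.e. membership in Icc 0 1
  have hae : ∀ᵐ δ ∂μ, δ ∈ Set.Icc (0 : ℝ) 1 := by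
    rw [ae_iff]
    have : {δ : ℝ | ¬ δ ∈ Set.Icc (0 : ℝ) 1} = (Set.Icc (0:ℝ) 1)ᶜ := rfl
    rw [this, measure_compl measurableSet_Icc (measure_ne_top μ _), hsupp,
      measure_univ]
    simp
  set g : ℝ → ℝ := fun δ => ((x δ i : ℕ) : ℝ) with hg
  have hgmeas : Measurable g := by
    exact measurable_from_top.comp ((measurable_pi_apply i).comp hmeas)
  have hbound : ∀ᵐ δ ∂μ, quota p H i - ((1 - δ) * ρ + δ) ≤ g δ ∧
      g δ ≤ quota p H i + (δ * ρ + (1 - δ)) := by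
    filter_upwards [hae] with δ hδ
    exact pointwise_bounds hn p hp H hδ.1 hδ.2 (hsel δ hδ) i
  have hq0 : 0 ≤ quota p H i := by
    apply div_nonneg (by positivity)
    exact Finset.sum_nonneg fun j _ => by positivity
  have hgint : Integrable g μ := by
    refine ⟨hgmeas.aestronglyMeasurable, ?_⟩
    apply HasFiniteIntegral.of_bounded (C := quota p H i + ρ + 1)
    filter_upwards [hbound, hae] with δ ⟨h1, h2⟩ hδ
    rw [Real.norm_eq_abs, abs_of_nonneg (by positivity)]
    nlinarith [hδ.1, hδ.2]
  have hidint : Integrable (fun δ : ℝ => δ) μ := by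
    refine ⟨measurable_id.aestronglyMeasurable, ?_⟩
    apply HasFiniteIntegral.of_bounded (C := 1)
    filter_upwards [hae] with δ hδ
    rw [Real.norm_eq_abs, abs_le]; exact ⟨by linarith [hδ.1], hδ.2⟩
  -- upper bound
  have hub : ∫ δ, g δ ∂μ ≤ quota p H i + (1/2) * (ρ + 1) := by
    have h1 : ∫ δ, g δ ∂μ ≤ ∫ δ, (quota p H i + 1 + (ρ - 1) * δ) ∂μ := by
      refine integral_mono_ae hgint ((integrable_const _).add (hidint.const_mul _)) ?_
      filter_upwards [hbound] with δ ⟨_, h2⟩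
      show g δ ≤ quota p H i + 1 + (ρ - 1) * δ
      linarith
    have h2 : ∫ δ, (quota p H i + 1 + (ρ - 1) * δ) ∂μ
        = quota p H i + (1/2) * (ρ + 1) := by
      rw [integral_add (integrable_const _) (hidint.const_mul _),
        integral_const_mul, hmean, integral_const]
      simp; ring
    linarith
  have hlb : quota p H i - (1/2) * (ρ + 1) ≤ ∫ δ, g δ ∂μ := by
    have h1 : ∫ δ, (quota p H i - ρ + (ρ - 1) * δ) ∂μ ≤ ∫ δ, g δ ∂μ := by
      refine integral_mono_ae ((integrable_const _).add (hidint.const_mul _)) hgint ?_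
      filter_upwards [hbound] with δ ⟨h1, _⟩
      show quota p H i - ρ + (ρ - 1) * δ ≤ g δ
      linarith
    have h2 : ∫ δ, (quota p H i - ρ + (ρ - 1) * δ) ∂μ
        = quota p H i - (1/2) * (ρ + 1) := by
      rw [integral_add (integrable_const _) (hidint.const_mul _),
        integral_const_mul, hmean, integral_const]
      simp; ring
    linarith
  rw [abs_le]
  constructor <;> [linarith; linarith]
end
end
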